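/- arXiv:1209.0051 — 6 statements merged into one kernel-verified Lean document; each statement's English description precedes it below -/
import Mathlib

section
/- Let V be a free Z[q,q⁻¹]-module with a pre-canonical structure (bar-involution ψ, sesquilinear pairing ⟨-,-⟩ valued in Z((q⁻¹)) for which ψ is flip-unitary, and standard basis {a_c} indexed by a partially ordered set). Then a canonical basis, i.e. a basis {b_c} such that each b_c is ψ-invariant, b_c ∈ a_c + span_{c'<c} Z[q,q⁻¹]·a_{c'}, and ⟨b_c,b_{c'}⟩ ∈ δ_{c,c'} + q⁻¹Z[[q⁻¹]], is unique if it exists. -/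
/-!
Statement 0: uniqueness of the canonical basis of a pre-canonical structure on a
free `ℤ[q,q⁻¹]`-module.  We realize `ℤ[q,q⁻¹]` as `LaurentPolynomial ℤ` and
`ℤ((q⁻¹))` as `LaurentSeries ℤ`, where the Laurent-series variable `X` stands
for `q⁻¹`.
-/

noncomputable section

open LaurentPolynomial HahnSeries
open scoped Classical

/-- `ℤ[q,q⁻¹]`. -/
abbrev Rq : Type := LaurentPolynomial ℤ

/-- `ℤ((q⁻¹))`, Laurent series in the variable `X = q⁻¹`. -/
abbrev Sq : Type := LaurentSeries ℤ

/-- The bar involution on `ℤ[q,q⁻¹]`, `q ↦ q⁻¹`. -/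
def bar : Rq ≃+* Rq := (LaurentPolynomial.invert (R := ℤ)).toRingEquiv

/-- The monoid homomorphism `qⁿ ↦ X⁻ⁿ ∈ ℤ((q⁻¹))`. -/
def qPow : Multiplicative ℤ →* Sq where
  toFun n := HahnSeries.single (-(Multiplicative.toAdd n)) (1 : ℤ)
  map_one' := by simpa using HahnSeries.single_zero_one
  map_mul' a b := by
    rw [HahnSeries.single_mul_single, mul_one]
    congr 1
    simp [toAdd_mul]
    ring

/-- The canonical embedding `ℤ[q,q⁻¹] → ℤ((q⁻¹))`, sending `q` to `X⁻¹`. -/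
def emb : Rq →+* Sq := (AddMonoidAlgebra.lift ℤ Sq ℤ qPow).toRingHom

/-- `s` lies in `δ + q⁻¹ℤ[[q⁻¹]]`:  with `X = q⁻¹`, the coefficient of `X^0`
is `δ` and all coefficients of negative powers of `X` (positive powers of `q`)
vanish. -/
def DeltaPlusLow (s : Sq) (δ : ℤ) : Prop :=
  s.coeff 0 = δ ∧ ∀ n : ℤ, n < 0 → s.coeff n = 0

lemma bar_apply (p : Rq) (n : ℤ) : (bar p).coeff n = p.coeff (-n) := LaurentPolynomial.invert_apply p n

/-- coefficient of a Hahn series as an additive hom -/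
def coeffHom (n : ℤ) : Sq →+ ℤ where
  toFun s := s.coeff n
  map_zero' := rfl
  map_add' _ _ := rfl

lemma coeff_finsupp_sum {α M : Type*} [Zero M] (f : α →₀ M) (g : α → M → Sq) (n : ℤ) :
    (f.sum g).coeff n = f.sum fun a b => (g a b).coeff n :=
  map_finsuppSum (coeffHom n) f g

lemma emb_coeff (p : Rq) (n : ℤ) : (emb p).coeff n = p.coeff (-n) := by
  have h0 : emb p = p.coeff.sum fun a c => (HahnSeries.single (-a) c : Sq) := by
    rw [show emb p = _ from AddMonoidAlgebra.lift_apply qPow p]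
    apply Finsupp.sum_congr
    intro a _
    rw [Algebra.smul_def]
    rw [show (algebraMap ℤ Sq) = (HahnSeries.C : ℤ →+* Sq) from RingHom.ext_int _ _]
    show HahnSeries.single (0:ℤ) (p.coeff a) * HahnSeries.single (-a) (1:ℤ) = _
    rw [HahnSeries.single_mul_single]
    simp
  rw [h0, coeff_finsupp_sum]
  simp only [HahnSeries.coeff_single]
  rw [Finsupp.sum]
  rw [Finset.sum_eq_single (-n)]
  · by_cases h : -n ∈ p.coeff.support
    · simp
    · simp [Finsupp.notMem_support_iff.mp h]
  · intro b _ hb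
    have : n ≠ -b := fun h => hb (by omega)
    simp [this]
  · intro h
    simp [Finsupp.notMem_support_iff.mp h]

lemma mul_coeff_eq_zero {s t : Sq} {A B n : ℤ} (hs : ∀ i < A, s.coeff i = 0)
    (ht : ∀ j < B, t.coeff j = 0) (hn : n < A + B) : (s * t).coeff n = 0 := by
  by_contra h
  have hmem : n ∈ (s * t).support := h
  obtain ⟨i, hi, j, hj, hij⟩ := HahnSeries.support_mul_subset hmem
  have hij' : i + j = n := hij
  have h1 : A ≤ i := by by_contra h'; exact hi (hs i (by omega))
  have h2 : B ≤ j := by by_contra h'; exact hj (ht j (by omega))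
  omega

lemma mul_coeff_boundary {s t : Sq} {A B : ℤ} (hs : ∀ i < A, s.coeff i = 0)
    (ht : ∀ j < B, t.coeff j = 0) : (s * t).coeff (A + B) = s.coeff A * t.coeff B := by
  rw [HahnSeries.coeff_mul]
  rw [Finset.sum_eq_single (A, B)]
  · intro ij hij hne
    rw [Finset.mem_addAntidiagonal] at hij
    obtain ⟨h1, h2, h3⟩ := hij
    have h3' : ij.1 + ij.2 = A + B := h3
    have hA : A ≤ ij.1 := by by_contra h'; exact h1 (hs _ (by omega))
    have hB : B ≤ ij.2 := by by_contra h'; exact h2 (ht _ (by omega))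
    exact absurd (Prod.ext (by omega) (by omega)) hne
  · intro h
    rw [Finset.mem_addAntidiagonal] at h
    push_neg at h
    by_cases h1 : s.coeff A = 0
    · rw [h1, zero_mul]
    by_cases h2 : t.coeff B = 0
    · rw [h2, mul_zero]
    exact absurd (h h1 h2) (by simp)

/-- top degree of a Laurent polynomial (0 for the zero polynomial) -/
def deg (r : Rq) : ℤ := if h : r.coeff.support.Nonempty then r.coeff.support.max' h else 0

lemma le_deg {r : Rq} {k : ℤ} (hk : k ∈ r.coeff.support) : k ≤ deg r := by
  rw [deg, dif_pos ⟨k, hk⟩]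
  exact Finset.le_max' _ _ hk

lemma deg_mem {r : Rq} (h : r ≠ 0) : deg r ∈ r.coeff.support := by
  have hne : r.coeff.support.Nonempty :=
    Finsupp.support_nonempty_iff.mpr (fun h' => h (AddMonoidAlgebra.coeff_injective h'))
  rw [deg, dif_pos hne]
  exact Finset.max'_mem _ _

lemma deg_nonneg {r : Rq} (h : r ≠ 0) (hbar : bar r = r) : 0 ≤ deg r := by
  have h1 : deg r ∈ r.coeff.support := deg_mem h
  have h2 : -deg r ∈ r.coeff.support := by
    rw [Finsupp.mem_support_iff] at h1 ⊢
    rw [show r.coeff (-(deg r)) = (bar r).coeff (deg r) from (bar_apply r (deg r)).symm, hbar]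
    exact h1
  have := le_deg h2
  omega

lemma emb_coeff_of_lt {r : Rq} {D : ℤ} (hD : ∀ k ∈ r.coeff.support, k ≤ D) {i : ℤ} (hi : i < -D) :
    (emb r).coeff i = 0 := by
  rw [emb_coeff]
  by_contra h
  have := hD (-i) (Finsupp.mem_support_iff.mpr h)
  omega

lemma DeltaPlusLow.coeff_nonpos {s : Sq} {δ : ℤ} (h : DeltaPlusLow s δ) {n : ℤ} (hn : n ≤ 0) :
    s.coeff n = if n = 0 then δ else 0 := by
  rcases eq_or_lt_of_le hn with h' | h'
  · rw [if_pos h', h', h.1]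
  · rw [if_neg (by omega), h.2 n h']

/-- the key coefficient computation for a single term of the double sum -/
lemma pair_term_coeff {r r' : Rq} {M : ℤ} (hM : 0 ≤ M)
    (hr : ∀ k ∈ r.coeff.support, k ≤ M) (hr' : ∀ k ∈ r'.coeff.support, k ≤ M)
    {s : Sq} {δ : ℤ} (hs : DeltaPlusLow s δ) :
    (emb r * (emb r' * s)).coeff (-(2 * M)) = r.coeff M * (r'.coeff M * δ) := by
  have hts : ∀ j < 1, (s - HahnSeries.single 0 δ).coeff j = 0 := by
    intro j hj
    rw [HahnSeries.coeff_sub, HahnSeries.coeff_single]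
    rw [hs.coeff_nonpos (by omega)]
    by_cases h : j = 0 <;> simp [h]
  have hdec : emb r * (emb r' * s)
      = emb r * (emb r' * HahnSeries.single 0 δ)
        + emb r * (emb r' * (s - HahnSeries.single 0 δ)) := by
    rw [← mul_add, ← mul_add, add_sub_cancel]
  rw [hdec, HahnSeries.coeff_add]
  have hsecond : (emb r * (emb r' * (s - HahnSeries.single 0 δ))).coeff (-(2 * M)) = 0 := by
    apply mul_coeff_eq_zero (A := -M) (B := -M + 1)
    · intro i hi; exact emb_coeff_of_lt hr hi
    · intro j hj
      apply mul_coeff_eq_zero (A := -M) (B := 1)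
      · intro i hi; exact emb_coeff_of_lt hr' hi
      · exact hts
      · omega
    · omega
  rw [hsecond, add_zero]
  have hfirst : ∀ j : ℤ, (emb r' * HahnSeries.single 0 δ).coeff j = (emb r').coeff j * δ :=
    fun j => HahnSeries.coeff_mul_single_zero
  have hb : (emb r * (emb r' * HahnSeries.single 0 δ)).coeff (-M + -M)
      = (emb r).coeff (-M) * (emb r' * HahnSeries.single 0 δ).coeff (-M) := by
    apply mul_coeff_boundary
    · intro i hi; exact emb_coeff_of_lt hr hi
    · intro j hj; rw [hfirst, emb_coeff_of_lt hr' hj, zero_mul]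
  rw [show -(2 * M) = -M + -M by ring, hb, hfirst, emb_coeff, emb_coeff, neg_neg]

variable {C : Type*} [PartialOrder C] {V : Type*} [AddCommGroup V] [Module Rq V]

/-- A pre-canonical structure on a free `ℤ[q,q⁻¹]`-module `V` with standard basis
indexed by the poset `C`. -/
structure Precanonical (C : Type*) [PartialOrder C] (V : Type*) [AddCommGroup V]
    [Module Rq V] where
  /-- the bar involution `ψ` -/
  ψ : V →+ V
  ψ_invol : ∀ v, ψ (ψ v) = v
  ψ_antilinear : ∀ (r : Rq) (v : V), ψ (r • v) = bar r • ψ v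
  /-- the sesquilinear pairing, valued in `ℤ((q⁻¹))` -/
  pair : V →+ V →+ Sq
  pair_sesq_left : ∀ (r : Rq) (u v : V), pair (r • u) v = emb (bar r) * pair u v
  pair_sesq_right : ∀ (r : Rq) (u v : V), pair u (r • v) = emb r * pair u v
  flip_unitary : ∀ u v : V, pair u v = pair (ψ v) (ψ u)
  /-- the standard basis `{a_c}` -/
  std : Module.Basis C Rq V
  ψ_upper : ∀ c : C,
    ψ (std c) - std c ∈ Submodule.span Rq (std '' {c' : C | c' < c})

/-- `b` is a canonical basis for the pre-canonical structure `P`: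
(I) each `b c` is `ψ`-invariant; (II) `b c ∈ a_c + span_{c'<c} ℤ[q,q⁻¹]·a_{c'}`;
(III) almost orthonormality `⟨b_c,b_{c'}⟩ ∈ δ_{c,c'} + q⁻¹ℤ[[q⁻¹]]`. -/
structure IsCanonicalBasis (P : Precanonical C V) (b : Module.Basis C Rq V) : Prop where
  bar_invariant : ∀ c : C, P.ψ (b c) = b c
  upper_triangular : ∀ c : C,
    b c - P.std c ∈ Submodule.span Rq (P.std '' {c' : C | c' < c})
  almost_orthonormal : ∀ c c' : C,
    DeltaPlusLow (P.pair (b c) (b c')) (if c = c' then 1 else 0)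

/-- triangularity: coordinates w.r.t. `b'` of an element of the span of standard basis
vectors indexed by `S` can only be supported on indices below `S`. -/
lemma repr_vanish (P : Precanonical C V) (b' : Module.Basis C Rq V)
    (hup : ∀ x : C, b' x - P.std x ∈ Submodule.span Rq (P.std '' {y : C | y < x}))
    {S : Set C} {v : V} (hv : v ∈ Submodule.span Rq (P.std '' S))
    {z : C} (hz : b'.repr v z ≠ 0) : ∃ x ∈ S, z ≤ x := by
  by_contra hcon
  push_neg at hcon
  set B := (b'.repr v).support.filter (fun y => ∀ x ∈ S, ¬ y ≤ x) with hB
  have hzB : z ∈ B := Finset.mem_filter.mpr ⟨Finsupp.mem_support_iff.mpr hz, hcon⟩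
  obtain ⟨m, hmB, hmax⟩ := B.exists_maximal ⟨z, hzB⟩
  obtain ⟨hm_supp, hm_bad⟩ := Finset.mem_filter.mp hmB
  -- std-coordinates of (b' y) at m
  have hkey : ∀ y, y ∈ (b'.repr v).support → y ≠ m → P.std.repr (b' y) m = 0 := by
    intro y hy hym
    have hsplit : P.std.repr (b' y) m
        = (Finsupp.single y (1 : Rq)) m + P.std.repr (b' y - P.std y) m := by
      conv_lhs => rw [show b' y = P.std y + (b' y - P.std y) by abel]
      rw [map_add, Finsupp.add_apply, Module.Basis.repr_self]
    rw [hsplit]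
    have h1 : (Finsupp.single y (1 : Rq)) m = 0 :=
      Finsupp.single_eq_of_ne hym.symm
    have h2 : P.std.repr (b' y - P.std y) m = 0 := by
      by_contra h2
      have hmem : m ∈ (P.std.repr (b' y - P.std y)).support := Finsupp.mem_support_iff.mpr h2
      have hsub : (↑(P.std.repr (b' y - P.std y)).support : Set C) ⊆ {w : C | w < y} :=
        (Module.Basis.mem_span_image _).mp (hup y)
      have hmy : m < y := hsub hmem
      -- then y is also "bad", contradicting maximality of m
      have hybad : ∀ x ∈ S, ¬ y ≤ x := by
        intro x hx hyx
        exact hm_bad x hx (le_of_lt (lt_of_lt_of_le hmy hyx))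
      exact absurd (hmax (Finset.mem_filter.mpr ⟨hy, hybad⟩) hmy.le) (not_le_of_gt hmy)
    rw [h1, h2, add_zero]
  have hkeym : P.std.repr (b' m) m = 1 := by
    have hsplit : P.std.repr (b' m) m
        = (Finsupp.single m (1 : Rq)) m + P.std.repr (b' m - P.std m) m := by
      conv_lhs => rw [show b' m = P.std m + (b' m - P.std m) by abel]
      rw [map_add, Finsupp.add_apply, Module.Basis.repr_self]
    have h2 : P.std.repr (b' m - P.std m) m = 0 := by
      by_contra h2
      have hmem : m ∈ (P.std.repr (b' m - P.std m)).support := Finsupp.mem_support_iff.mpr h2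
      have hsub : (↑(P.std.repr (b' m - P.std m)).support : Set C) ⊆ {w : C | w < m} :=
        (Module.Basis.mem_span_image _).mp (hup m)
      exact absurd (hsub hmem) (lt_irrefl m)
    rw [hsplit, h2, add_zero, Finsupp.single_eq_same]
  -- two computations of the std-coordinate of v at m
  have h0 : P.std.repr v m = 0 := by
    by_contra h
    have hmem : m ∈ (P.std.repr v).support := Finsupp.mem_support_iff.mpr h
    have hsub : (↑(P.std.repr v).support : Set C) ⊆ S := (Module.Basis.mem_span_image _).mp hv
    exact hm_bad m (hsub hmem) le_rfl
  have hvsum : ((b'.repr v).sum fun y r => r • b' y) = v := by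
    rw [← Finsupp.linearCombination_apply]
    exact b'.linearCombination_repr v
  have h1 : P.std.repr v m = (b'.repr v).sum fun y r => r * (P.std.repr (b' y) m) := by
    conv_lhs => rw [← hvsum]
    rw [map_finsuppSum, Finsupp.sum_apply]
    apply Finsupp.sum_congr
    intro y _
    rw [map_smul, Finsupp.smul_apply, smul_eq_mul]
  rw [Finsupp.sum, Finset.sum_eq_single m] at h1
  · rw [hkeym, mul_one] at h1
    exact Finsupp.mem_support_iff.mp hm_supp (h0 ▸ h1.symm)
  · intro y hy hym
    rw [hkey y hy hym, mul_zero]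
  · intro hm
    exact absurd hm_supp hm

/-- bar-invariance of coordinates of a `ψ`-invariant vector w.r.t. a `ψ`-invariant basis. -/
lemma coord_bar (P : Precanonical C V) (b' : Module.Basis C Rq V)
    (hψb' : ∀ x : C, P.ψ (b' x) = b' x) {dv : V} (hψd : P.ψ dv = dv) (x : C) :
    bar ((b'.repr dv) x) = (b'.repr dv) x := by
  have hdsum : ((b'.repr dv).sum fun y r => r • b' y) = dv := by
    rw [← Finsupp.linearCombination_apply]
    exact b'.linearCombination_repr dv
  have h1 : P.ψ dv = (b'.repr dv).sum fun y r => bar r • b' y := by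
    conv_lhs => rw [← hdsum]
    rw [map_finsuppSum]
    apply Finsupp.sum_congr
    intro y _
    rw [P.ψ_antilinear, hψb' y]
  have h2 : (b'.repr dv) x = (b'.repr dv).sum fun y r => (Finsupp.single y (bar r)) x := by
    conv_lhs => rw [← hψd, h1, map_finsuppSum, Finsupp.sum_apply]
    apply Finsupp.sum_congr
    intro y _
    rw [map_smul, Module.Basis.repr_self, Finsupp.smul_apply, smul_eq_mul,
      Finsupp.single_apply, Finsupp.single_apply]
    by_cases h : y = x <;> simp [h]
  rw [Finsupp.sum, Finset.sum_eq_single x] at h2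
  · rw [Finsupp.single_eq_same] at h2
    exact h2.symm
  · intro y _ hyx
    exact Finsupp.single_eq_of_ne hyx.symm
  · intro hx
    rw [Finsupp.notMem_support_iff.mp hx, map_zero, Finsupp.single_zero, Finsupp.coe_zero,
      Pi.zero_apply]

/-- A pre-canonical structure has at most one canonical basis. -/
theorem canonical_basis_unique (P : Precanonical C V) (b b' : Module.Basis C Rq V)
    (hb : IsCanonicalBasis P b) (hb' : IsCanonicalBasis P b') :
    ∀ c : C, b c = b' c := by
  intro c
  by_contra hne
  set d : V := b c - b' c with hd
  have hdne : d ≠ 0 := sub_ne_zero.mpr hne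
  set p : C →₀ Rq := b'.repr d with hp
  have hpne : p ≠ 0 := by
    intro h0
    apply hdne
    have := congrArg b'.repr.symm (hp ▸ h0)
    simpa using this
  have hsupp_ne : p.support.Nonempty := Finsupp.support_nonempty_iff.mpr hpne
  -- d lies in the span of lower standard basis vectors
  have hdspan : d ∈ Submodule.span Rq (P.std '' {x : C | x < c}) := by
    have h1 := hb.upper_triangular c
    have h2 := hb'.upper_triangular c
    have : d = (b c - P.std c) - (b' c - P.std c) := by rw [hd]; abel
    rw [this]
    exact Submodule.sub_mem _ h1 h2
  -- hence the coordinate at c vanishes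
  have hpc : c ∉ p.support := by
    intro hc
    obtain ⟨x, hx, hcx⟩ := repr_vanish P b' hb'.upper_triangular hdspan
      (Finsupp.mem_support_iff.mp hc)
    exact absurd (lt_of_le_of_lt hcx hx) (lt_irrefl c)
  -- ψ-invariance of d and bar-invariance of its coordinates
  have hψd : P.ψ d = d := by
    rw [hd, map_sub, hb.bar_invariant, hb'.bar_invariant]
  have hbar : ∀ x : C, bar (p x) = p x := fun x =>
    coord_bar P b' hb'.bar_invariant hψd x
  -- degree bound
  set M : ℤ := p.support.sup' hsupp_ne (fun x => deg (p x)) with hM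
  obtain ⟨x₀, hx₀, hx₀M⟩ := Finset.exists_mem_eq_sup' hsupp_ne (fun x => deg (p x))
  have hpx₀ : p x₀ ≠ 0 := Finsupp.mem_support_iff.mp hx₀
  have hM0 : 0 ≤ M := by
    rw [hM, hx₀M]
    exact deg_nonneg hpx₀ (hbar x₀)
  have hdegle : ∀ x ∈ p.support, ∀ k ∈ (p x).coeff.support, k ≤ M := by
    intro x hx k hk
    exact le_trans (le_deg hk) (Finset.le_sup' (fun x => deg (p x)) hx)
  have hpx₀M : (p x₀).coeff M ≠ 0 := by
    have : deg (p x₀) ∈ (p x₀).coeff.support := deg_mem hpx₀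
    rw [← hx₀M] at this
    exact Finsupp.mem_support_iff.mp this
  set n₀ : ℤ := -(2 * M) with hn₀
  have hdsum : (p.sum fun y r => r • b' y) = d := by
    rw [hp, ← Finsupp.linearCombination_apply]
    exact b'.linearCombination_repr d
  -- expansions of pairings against d
  have step2 : ∀ u : V, P.pair u d = p.sum fun z r' => emb r' * P.pair u (b' z) := by
    intro u
    have h := map_finsuppSum (P.pair u) p (fun y r => r • b' y)
    rw [hdsum] at h
    rw [h]
    apply Finsupp.sum_congr
    intro z _
    rw [P.pair_sesq_right]
  have step1 : P.pair d d = p.sum fun x r => emb (bar r) * P.pair (b' x) d := by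
    have h := map_finsuppSum (P.pair.flip d) p (fun y r => r • b' y)
    rw [hdsum] at h
    simp only [AddMonoidHom.flip_apply] at h
    rw [h]
    apply Finsupp.sum_congr
    intro y _
    rw [P.pair_sesq_left]
  -- the key identity (∗)
  have e1 : P.pair (b c) (b' c) = P.pair (b' c) (b c) := by
    rw [P.flip_unitary (b c) (b' c), hb'.bar_invariant, hb.bar_invariant]
  have star : P.pair d d = (P.pair (b c) (b c) - P.pair (b' c) (b' c))
      - (P.pair (b' c) d + P.pair (b' c) d) := by
    rw [hd]
    simp only [map_sub, AddMonoidHom.sub_apply]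
    rw [e1]
    abel
  -- coefficient of the LHS at n₀
  have lhs_coeff : (P.pair d d).coeff n₀
      = p.sum fun x _ => (p x).coeff M * (p x).coeff M := by
    rw [step1]
    rw [coeff_finsupp_sum]
    apply Finsupp.sum_congr
    intro x hx
    rw [step2 (b' x), Finsupp.mul_sum, coeff_finsupp_sum]
    have hinner : ∀ z ∈ p.support,
        (emb (bar (p x)) * (emb (p z) * P.pair (b' x) (b' z))).coeff n₀
        = if x = z then (p x).coeff M * (p z).coeff M else 0 := by
      intro z hz
      rw [hbar x, hn₀]
      rw [pair_term_coeff hM0 (hdegle x hx) (hdegle z hz) (hb'.almost_orthonormal x z)]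
      by_cases h : x = z <;> simp [h]
    rw [Finsupp.sum_congr (g2 := fun z (_ : Rq) => if x = z then (p x).coeff M * (p z).coeff M else 0) hinner]
    rw [Finsupp.sum_ite_eq]
    rw [if_pos hx]
  -- coefficient of the RHS at n₀
  have hlow : (P.pair (b' c) d).coeff n₀ = 0 := by
    rw [step2 (b' c), coeff_finsupp_sum]
    rw [Finsupp.sum]
    apply Finset.sum_eq_zero
    intro z hz
    have hzc : z ≠ c := fun h => hpc (h ▸ hz)
    have hdpl := hb'.almost_orthonormal c z
    rw [if_neg (fun h => hzc h.symm)] at hdpl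
    apply mul_coeff_eq_zero (A := -M) (B := 1)
    · intro i hi; exact emb_coeff_of_lt (hdegle z hz) hi
    · intro j hj
      rcases lt_or_eq_of_le (show j ≤ 0 by omega) with h' | h'
      · exact hdpl.2 j h'
      · rw [h', hdpl.1]
    · rw [hn₀]; omega
  have hdiag : (P.pair (b c) (b c)).coeff n₀ - (P.pair (b' c) (b' c)).coeff n₀ = 0 := by
    rw [(hb.almost_orthonormal c c).coeff_nonpos (by rw [hn₀]; omega),
      (hb'.almost_orthonormal c c).coeff_nonpos (by rw [hn₀]; omega)]
    simp
  -- put it together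
  have hzero : (p.sum fun x _ => (p x).coeff M * (p x).coeff M) = 0 := by
    rw [← lhs_coeff, star]
    rw [HahnSeries.coeff_sub, HahnSeries.coeff_sub, HahnSeries.coeff_add, hlow, hdiag]
    ring
  have hpos : 0 < p.sum fun x _ => (p x).coeff M * (p x).coeff M := by
    rw [Finsupp.sum]
    apply Finset.sum_pos'
    · intro x _
      exact mul_self_nonneg _
    · exact ⟨x₀, hx₀, mul_self_pos.mpr hpx₀M⟩
  rw [hzero] at hpos
  exact lt_irrefl 0 hpos

end
end

section
/- If f₁,...,f_n ∈ Z[q,q⁻¹] are Laurent polynomials invariant under the bar involution q ↦ q⁻¹, and Σᵢ fᵢ² ∈ 1 + q⁻¹Z[q⁻¹], then exactly one fᵢ equals ±1 and all others are zero. -/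
/-!
Statement 2: if `f₁,...,f_n ∈ ℤ[q,q⁻¹]` are bar-invariant Laurent polynomials
with `Σᵢ fᵢ² ∈ 1 + q⁻¹ℤ[q⁻¹]`, then exactly one `fᵢ` is `±1` and the others
vanish.  A Laurent polynomial is a finitely supported function `ℤ → ℤ`
(`LaurentPolynomial ℤ = AddMonoidAlgebra ℤ ℤ`), and `g k` is the coefficient of
`q^k` in `g`; the condition `g ∈ 1 + q⁻¹ℤ[q⁻¹]` says `g 0 = 1` and `g k = 0`
for `k > 0`.
-/

noncomputable section

open LaurentPolynomial

lemma sq_coeff_zero (g : Rq) (hg : ∀ n : ℤ, g.coeff (-n) = g.coeff n) :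
    (g ^ 2).coeff 0 = ∑ a ∈ g.coeff.support, (g.coeff a) ^ 2 := by
  classical
  rw [sq, AddMonoidAlgebra.coeff_mul]
  unfold Finsupp.sum
  refine Finset.sum_congr rfl fun a ha => ?_
  show (∑ a₂ ∈ g.coeff.support, if a + a₂ = 0 then g.coeff a * g.coeff a₂ else 0) = g.coeff a ^ 2
  have h1 : ∀ a₂ ∈ g.coeff.support, (if a + a₂ = 0 then g.coeff a * g.coeff a₂ else 0)
      = if a₂ = -a then g.coeff a * g.coeff a₂ else 0 := by
    intro a₂ _
    congr 1
    simp [eq_comm, eq_neg_iff_add_eq_zero, add_comm]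
  rw [Finset.sum_congr rfl h1, Finset.sum_ite_eq' g.coeff.support (-a) (fun a₂ => g.coeff a * g.coeff a₂)]
  have hmem : -a ∈ g.coeff.support := by
    simp only [Finsupp.mem_support_iff] at ha ⊢
    rwa [hg]
  rw [if_pos hmem, hg, sq]

theorem sum_of_squares_of_bar_invariant (n : ℕ) (f : Fin n → Rq)
    (hbar : ∀ i, bar (f i) = f i)
    (hconst : (∑ i, (f i) ^ 2).coeff 0 = 1)
    (hpos : ∀ k : ℤ, 0 < k → (∑ i, (f i) ^ 2).coeff k = 0) :
    ∃ i, (f i = 1 ∨ f i = -1) ∧ ∀ j, j ≠ i → f j = 0 := by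
  classical
  have hsym : ∀ i, ∀ k : ℤ, (f i).coeff (-k) = (f i).coeff k := by
    intro i k
    conv_rhs => rw [← hbar i]
    exact (LaurentPolynomial.invert_apply (f i) k).symm
  set S : Fin n → ℤ := fun i => ∑ a ∈ (f i).coeff.support, ((f i).coeff a) ^ 2 with hS
  have key : ∑ i, S i = 1 := by
    rw [← hconst, AddMonoidAlgebra.coeff_sum, Finsupp.finset_sum_apply]
    exact (Finset.sum_congr rfl fun i _ => (sq_coeff_zero (f i) (hsym i)).symm)
  have hSnonneg : ∀ i, 0 ≤ S i := fun i => Finset.sum_nonneg fun a _ => sq_nonneg _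
  have hex : ∃ i, S i ≠ 0 := by
    by_contra h
    push_neg at h
    rw [Finset.sum_congr rfl fun i _ => h i] at key
    simp at key
  obtain ⟨i, hi⟩ := hex
  have hle : S i ≤ 1 := key ▸ Finset.single_le_sum (fun j _ => hSnonneg j) (Finset.mem_univ i)
  have hSi : S i = 1 := by have := hSnonneg i; omega
  have hrest : ∀ j, j ≠ i → S j = 0 := by
    intro j hj
    have h2 : ∑ k ∈ (Finset.univ.erase i), S k = 0 := by
      have := Finset.add_sum_erase Finset.univ S (Finset.mem_univ i)
      omega
    exact (Finset.sum_eq_zero_iff_of_nonneg fun k _ => hSnonneg k).mp h2 j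
      (Finset.mem_erase.mpr ⟨hj, Finset.mem_univ j⟩)
  refine ⟨i, ?_, ?_⟩
  · have hterm : ∀ a ∈ (f i).coeff.support, 1 ≤ ((f i).coeff a) ^ 2 := by
      intro a ha
      have : (f i).coeff a ≠ 0 := Finsupp.mem_support_iff.mp ha
      nlinarith [sq_nonneg ((f i).coeff a), sq_abs ((f i).coeff a), abs_pos.mpr this]
    have hcard : (f i).coeff.support.card ≤ 1 := by
      by_contra hc
      push_neg at hc
      have h2 : ((f i).coeff.support.card : ℤ) ≤ S i := by
        simpa using Finset.card_nsmul_le_sum (f i).coeff.support _ 1 hterm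
      omega
    have hne : (f i).coeff.support.Nonempty := by
      rw [Finsupp.support_nonempty_iff]
      intro h0
      rw [hS] at hi
      simp [h0] at hi
    obtain ⟨a₀, ha₀⟩ := Finset.card_eq_one.mp (le_antisymm hcard hne.card_pos)
    have ha0 : a₀ = 0 := by
      have hm : -a₀ ∈ (f i).coeff.support := by
        have : a₀ ∈ (f i).coeff.support := ha₀ ▸ Finset.mem_singleton_self a₀
        simp only [Finsupp.mem_support_iff] at this ⊢
        rwa [hsym]
      rw [ha₀, Finset.mem_singleton] at hm
      omega
    rw [ha0] at ha₀
    have hval : ((f i).coeff 0) ^ 2 = 1 := by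
      rw [hS] at hSi
      simp only [ha₀, Finset.sum_singleton] at hSi
      exact hSi
    have hfi : f i = AddMonoidAlgebra.single 0 ((f i).coeff 0) := by
      refine AddMonoidAlgebra.ext (Finsupp.ext fun b => ?_)
      rcases eq_or_ne b 0 with rfl | hb
      · exact (Finsupp.single_eq_same).symm
      · rw [AddMonoidAlgebra.coeff_single, Finsupp.single_eq_of_ne' (Ne.symm hb)]
        by_contra hnz
        have : b ∈ (f i).coeff.support := Finsupp.mem_support_iff.mpr hnz
        rw [ha₀, Finset.mem_singleton] at this
        exact hb this
    have hunit : IsUnit ((f i).coeff 0) := by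
      rw [sq] at hval
      exact IsUnit.of_mul_eq_one _ hval
    rcases Int.isUnit_iff.mp hunit with h | h
    · left
      rw [hfi, h]
      exact (AddMonoidAlgebra.one_def).symm
    · right
      rw [hfi, h]
      rw [show ((-1 : ℤ)) = -(1 : ℤ) from rfl, AddMonoidAlgebra.single_neg]
      exact congrArg Neg.neg (AddMonoidAlgebra.one_def).symm
  · intro j hj
    have h0 : S j = 0 := hrest j hj
    refine AddMonoidAlgebra.ext (Finsupp.ext fun a => ?_)
    by_contra hnz
    have ha : a ∈ (f j).coeff.support := Finsupp.mem_support_iff.mpr hnz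
    have hz := (Finset.sum_eq_zero_iff_of_nonneg fun a _ => sq_nonneg ((f j).coeff a)).mp h0 a ha
    exact hnz (pow_eq_zero_iff two_ne_zero |>.mp hz)


end
end

section
/- Let V be a free Z[q,q⁻¹]-module with a pre-canonical structure (ψ, ⟨-,-⟩, {a_c}) with pairing valued in Z[q,q⁻¹] and invertible evaluation map, admitting a canonical basis {b_c}. Let ψ* be the dual bar-involution and {a*_c}, {b*_c} the right dual bases of {a_c}, {b_c}. Then the dual basis {b*_c} is a canonical basis for the dual pre-canonical structure (conjugated pairing, ψ*, {a*_c} with the opposite partial order); in particular each b*_c is ψ*-invariant, the transition matrix from {b*_c} to {a*_c} is triangular with respect to the opposite order, and the dual basis vectors are almost orthonormal for the conjugated pairing. -/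
/-!
Statement 5: the dual basis of a canonical basis is canonical for the dual
pre-canonical structure (conjugated pairing, dual bar-involution `ψ*`, dual
standard basis with the opposite partial order).  The pairing is valued in
`ℤ[q,q⁻¹] = LaurentPolynomial ℤ`.
-/

noncomputable section

open LaurentPolynomial
open scoped Classical

/-- `g ∈ δ + q⁻¹ℤ[[q⁻¹]]` for a Laurent polynomial `g`:  the coefficient of
`q⁰` is `δ` and the coefficients of all positive powers of `q` vanish. -/
def DeltaPlusLowR (g : Rq) (δ : ℤ) : Prop :=
  g.coeff 0 = δ ∧ ∀ k : ℤ, 0 < k → g.coeff k = 0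

variable {C : Type*} [PartialOrder C] {V : Type*} [AddCommGroup V] [Module Rq V]

structure PrecanonicalR (C : Type*) [PartialOrder C] (V : Type*) [AddCommGroup V]
    [Module Rq V] where
  ψ : V →+ V
  ψ_invol : ∀ v, ψ (ψ v) = v
  ψ_antilinear : ∀ (r : Rq) (v : V), ψ (r • v) = bar r • ψ v
  pair : V →+ V →+ Rq
  pair_sesq_left : ∀ (r : Rq) (u v : V), pair (r • u) v = bar r * pair u v
  pair_sesq_right : ∀ (r : Rq) (u v : V), pair u (r • v) = r * pair u v
  flip_unitary : ∀ u v : V, pair u v = pair (ψ v) (ψ u)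
  std : Module.Basis C Rq V
  ψ_upper : ∀ c : C,
    ψ (std c) - std c ∈ Submodule.span Rq (std '' {c' : C | c' < c})


lemma bar_bar (x : Rq) : bar (bar x) = x := by
  ext n; simp [bar]

lemma one_coeff (k : ℤ) : (1 : Rq).coeff k = if k = 0 then 1 else 0 := by
  rw [AddMonoidAlgebra.one_def, AddMonoidAlgebra.coeff_single, Finsupp.single_apply]
  simp [eq_comm]

lemma mul_coeff_zero (f g : Rq) (N : ℤ) (hf : ∀ k, N < k → f.coeff k = 0)
    (hg : ∀ k, 0 ≤ k → g.coeff k = 0) : (f * g).coeff N = 0 := by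
  rw [AddMonoidAlgebra.coeff_mul, Finsupp.sum]
  apply Finset.sum_eq_zero
  intro a ha
  rw [Finsupp.sum]
  apply Finset.sum_eq_zero
  intro b hb
  split_ifs with h
  · exfalso
    have ha' : a ≤ N := by
      by_contra h'
      exact (Finsupp.mem_support_iff.mp ha) (hf a (lt_of_not_ge h'))
    have hb' : b < 0 := by
      by_contra h'
      exact (Finsupp.mem_support_iff.mp hb) (hg b (le_of_not_gt h'))
    omega
  · rfl

lemma pair_repr (P : PrecanonicalR C V) {β γ : Module.Basis C Rq V}
    (h : ∀ c c', P.pair (β c) (γ c') = if c = c' then 1 else 0) (v : V) (d : C) :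
    P.pair (β d) v = γ.repr v d := by
  conv_lhs => rw [← γ.linearCombination_repr v, Finsupp.linearCombination_apply, Finsupp.sum]
  rw [map_sum]
  have h1 : ∀ i ∈ (γ.repr v).support, P.pair (β d) (γ.repr v i • γ i)
      = if d = i then γ.repr v i else 0 := by
    intro i _
    rw [P.pair_sesq_right, h]
    split_ifs <;> simp
  rw [Finset.sum_congr rfl h1, Finset.sum_ite_eq]
  split_ifs with hd
  · rfl
  · exact (Finsupp.notMem_support_iff.mp hd).symm

lemma pair_span_zero (P : PrecanonicalR C V) (w : V) (s : Set C)
    (h : ∀ d ∈ s, P.pair (P.std d) w = 0) {x : V}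
    (hx : x ∈ Submodule.span Rq (P.std '' s)) : P.pair x w = 0 := by
  induction hx using Submodule.span_induction with
  | mem y hy => obtain ⟨d, hd, rfl⟩ := hy; exact h d hd
  | zero => simp
  | add y z _ _ hy hz => rw [map_add, AddMonoidHom.add_apply, hy, hz, add_zero]
  | smul r y _ hy => rw [P.pair_sesq_left, hy, mul_zero]

lemma pair_left_expand (P : PrecanonicalR C V) (b' : Module.Basis C Rq V) (v w : V) :
    P.pair v w = ∑ d ∈ (b'.repr v).support, bar (b'.repr v d) * P.pair (b' d) w := by
  conv_lhs => rw [← b'.linearCombination_repr v, Finsupp.linearCombination_apply, Finsupp.sum]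
  rw [map_sum, AddMonoidHom.finset_sum_apply]
  exact Finset.sum_congr rfl fun i _ => by rw [P.pair_sesq_left]

lemma pair_right_expand (P : PrecanonicalR C V) (b' : Module.Basis C Rq V) (u v : V) :
    P.pair u v = ∑ d ∈ (b'.repr v).support, b'.repr v d * P.pair u (b' d) := by
  conv_lhs => rw [← b'.linearCombination_repr v, Finsupp.linearCombination_apply, Finsupp.sum]
  rw [map_sum]
  exact Finset.sum_congr rfl fun i _ => by rw [P.pair_sesq_right]

/-- The canonical basis conditions (I), (II), (III) for the primal structure. -/
structure IsCanonicalBasisR (P : PrecanonicalR C V) (b : Module.Basis C Rq V) : Prop where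
  bar_invariant : ∀ c : C, P.ψ (b c) = b c
  upper_triangular : ∀ c : C,
    b c - P.std c ∈ Submodule.span Rq (P.std '' {c' : C | c' < c})
  almost_orthonormal : ∀ c c' : C,
    DeltaPlusLowR (P.pair (b c) (b c')) (if c = c' then 1 else 0)

/-- Suppose `b` is a canonical basis for `P`, `ψ*` is the dual
bar-involution (an antilinear involution with `⟨ψ(u),v⟩ = bar⟨u,ψ*(v)⟩`),
and `a*`, `b*` are the right dual bases of the standard and canonical bases
(`⟨a_c, a*_{c'}⟩ = δ_{c,c'}` and `⟨b_c, b*_{c'}⟩ = δ_{c,c'}`).  Then `b*` is a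
canonical basis for the dual pre-canonical structure:  each `b*_c` is
`ψ*`-invariant, `b*_c ∈ a*_c + Σ ℤ[q,q⁻¹]·a*_{c'}` with the sum over `c'` below
`c` in the *opposite* order (i.e. `c < c'`), and the `b*_c` are almost
orthonormal for the bar-conjugated pairing. -/
theorem dual_canonical_basis (P : PrecanonicalR C V) (b : Module.Basis C Rq V)
    (hb : IsCanonicalBasisR P b)
    (ψstar : V →+ V)
    (hstar_invol : ∀ v, ψstar (ψstar v) = v)
    (hstar_antilinear : ∀ (r : Rq) (v : V), ψstar (r • v) = bar r • ψstar v)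
    (hstar_def : ∀ u v : V, P.pair (P.ψ u) v = bar (P.pair u (ψstar v)))
    (astar bstar : Module.Basis C Rq V)
    (hastar : ∀ c c' : C, P.pair (P.std c) (astar c') = if c = c' then 1 else 0)
    (hbstar : ∀ c c' : C, P.pair (b c) (bstar c') = if c = c' then 1 else 0) :
    (∀ c : C, ψstar (bstar c) = bstar c) ∧
    (∀ c : C, bstar c - astar c ∈
      Submodule.span Rq (astar '' {c' : C | c < c'})) ∧
    (∀ c c' : C,
      DeltaPlusLowR (bar (P.pair (bstar c) (bstar c'))) (if c = c' then 1 else 0)) := by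
  have hreprA : ∀ (v : V) (d : C), P.pair (P.std d) v = astar.repr v d :=
    pair_repr P hastar
  have hreprB : ∀ (v : V) (d : C), P.pair (b d) v = bstar.repr v d :=
    pair_repr P hbstar
  have key : ∀ c d : C, ¬ c ≤ d → astar.repr (bstar c) d = 0 := by
    intro c
    by_contra hcon
    push_neg at hcon
    set S : Finset C := (astar.repr (bstar c)).support.filter (fun d => ¬ c ≤ d) with hS
    have hSne : S.Nonempty := by
      obtain ⟨d, hd1, hd2⟩ := hcon
      exact ⟨d, Finset.mem_filter.mpr ⟨Finsupp.mem_support_iff.mpr hd2, hd1⟩⟩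
    obtain ⟨m, hmS, hmin⟩ := S.exists_minimal hSne
    obtain ⟨hm1, hm2⟩ := Finset.mem_filter.mp hmS
    have hzero : ∀ d ∈ {c' : C | c' < m}, P.pair (P.std d) (bstar c) = 0 := by
      intro d hd
      rw [hreprA]
      by_contra hne
      have hcd : ¬ c ≤ d := fun hcd => hm2 (le_trans hcd hd.le)
      have hdS : d ∈ S := Finset.mem_filter.mpr ⟨Finsupp.mem_support_iff.mpr hne, hcd⟩
      exact (lt_irrefl d) (lt_of_lt_of_le hd (hmin hdS hd.le))
    have h0 : P.pair (b m - P.std m) (bstar c) = 0 :=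
      pair_span_zero P _ _ hzero (hb.upper_triangular m)
    rw [map_sub, AddMonoidHom.sub_apply, hbstar,
      if_neg (fun h => hm2 (le_of_eq h.symm)), hreprA, zero_sub, neg_eq_zero] at h0
    exact Finsupp.mem_support_iff.mp hm1 h0
  refine ⟨?_, ?_, ?_⟩
  · -- ψ*-invariance
    intro c
    apply bstar.repr.injective
    ext d
    rw [← hreprB, ← hreprB]
    have h1 := hstar_def (b d) (bstar c)
    rw [hb.bar_invariant d, hbstar] at h1
    have h2 := congrArg bar h1
    rw [bar_bar] at h2
    rw [← h2, hbstar]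
    split_ifs <;> simp
  · -- triangularity
    intro c
    have hnc : astar.repr (bstar c) c = 1 := by
      have h0 : P.pair (b c - P.std c) (bstar c) = 0 := by
        refine pair_span_zero P _ _ (fun d hd => ?_) (hb.upper_triangular c)
        rw [hreprA]
        exact key c d (fun hcd => absurd (lt_of_le_of_lt hcd hd) (lt_irrefl c))
      rw [map_sub, AddMonoidHom.sub_apply, hbstar, if_pos rfl, hreprA, sub_eq_zero] at h0
      exact h0.symm
    have hcmem : c ∈ (astar.repr (bstar c)).support :=
      Finsupp.mem_support_iff.mpr (by rw [hnc]; exact one_ne_zero)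
    have hrep : bstar c = ∑ d ∈ (astar.repr (bstar c)).support,
        astar.repr (bstar c) d • astar d := by
      conv_lhs => rw [← astar.linearCombination_repr (bstar c),
        Finsupp.linearCombination_apply, Finsupp.sum]
    have hsplit : bstar c - astar c = ∑ d ∈ (astar.repr (bstar c)).support.erase c,
        astar.repr (bstar c) d • astar d := by
      conv_lhs => rw [hrep, ← Finset.add_sum_erase _ _ hcmem, hnc, one_smul]
      exact add_sub_cancel_left _ _
    rw [hsplit]
    apply Submodule.sum_mem
    intro d hd
    have hd' := Finset.mem_of_mem_erase hd
    have hne := Finset.ne_of_mem_erase hd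
    have hle : c ≤ d := by
      by_contra h
      exact Finsupp.mem_support_iff.mp hd' (key c d h)
    exact Submodule.smul_mem _ _ (Submodule.subset_span ⟨d, lt_of_le_of_ne hle hne.symm, rfl⟩)
  · -- almost orthonormality
    intro c c'
    set s : C →₀ Rq := b.repr (bstar c) with hs
    have hval : P.pair (bstar c) (bstar c') = bar (s c') := by
      rw [pair_left_expand P b (bstar c) (bstar c'), ← hs]
      have h1 : ∀ d ∈ s.support, bar (s d) * P.pair (b d) (bstar c')
          = if c' = d then bar (s c') else 0 := by
        intro d _
        rw [hbstar]
        by_cases h : d = c'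
        · subst h; simp
        · rw [if_neg h, if_neg (Ne.symm h), mul_zero]
      rw [Finset.sum_congr rfl h1, Finset.sum_ite_eq]
      split_ifs with h
      · rfl
      · rw [Finsupp.notMem_support_iff.mp h, map_zero]
    set r : C → Rq := fun d => s d - (if d = c then 1 else 0) with hrdef
    have hsr : ∀ d (k : ℤ), (s d).coeff k = (r d).coeff k + (if d = c then (1 : Rq) else 0).coeff k := by
      intro d k
      simp only [hrdef]
      rw [AddMonoidAlgebra.coeff_sub, Finsupp.sub_apply]
      ring
    have hrT : ∀ d, d ∉ insert c s.support → r d = 0 := by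
      intro d hd
      simp only [Finset.mem_insert, not_or] at hd
      simp only [hrdef]
      rw [Finsupp.notMem_support_iff.mp hd.2, if_neg hd.1, sub_zero]
    have hEq : ∀ d', r d' = - ∑ d ∈ s.support,
        s d * (P.pair (b d') (b d) - (if d' = d then 1 else 0)) := by
      intro d'
      have h2 : P.pair (b d') (bstar c) = ∑ d ∈ s.support, s d * P.pair (b d') (b d) := by
        rw [pair_right_expand P b (b d') (bstar c), ← hs]
      rw [hbstar] at h2
      have h3 : ∑ d ∈ s.support, s d * (if d' = d then (1 : Rq) else 0) = s d' := by
        have h4 : ∀ d ∈ s.support, s d * (if d' = d then (1 : Rq) else 0)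
            = if d' = d then s d' else 0 := by
          intro d _
          by_cases h : d' = d
          · subst h; simp
          · simp [h]
        rw [Finset.sum_congr rfl h4, Finset.sum_ite_eq]
        split_ifs with h
        · rfl
        · exact (Finsupp.notMem_support_iff.mp h).symm
      simp only [hrdef, mul_sub]
      rw [Finset.sum_sub_distrib, h3, ← h2]
      ring
    have hr : ∀ d (k : ℤ), 0 ≤ k → (r d).coeff k = 0 := by
      by_contra hcon
      push_neg at hcon
      obtain ⟨d0, k0, hk0, hr0⟩ := hcon
      set U : Finset ℤ :=
        ((insert c s.support).biUnion fun d => (r d).coeff.support).filter (fun k => 0 ≤ k) with hU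
      have hd0T : d0 ∈ insert c s.support := by
        by_contra h
        rw [hrT d0 h] at hr0
        simp at hr0
      have hk0U : k0 ∈ U := Finset.mem_filter.mpr
        ⟨Finset.mem_biUnion.mpr ⟨d0, hd0T, Finsupp.mem_support_iff.mpr hr0⟩, hk0⟩
      set N := U.max' ⟨k0, hk0U⟩ with hN
      have hNU : N ∈ U := U.max'_mem _
      obtain ⟨hNU1, hN0⟩ := Finset.mem_filter.mp hNU
      obtain ⟨d1, _, hNd1⟩ := Finset.mem_biUnion.mp hNU1
      have hne := Finsupp.mem_support_iff.mp hNd1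
      have hsbound : ∀ d (k : ℤ), N < k → (s d).coeff k = 0 := by
        intro d k hk
        have hrk : (r d).coeff k = 0 := by
          by_cases hdT : d ∈ insert c s.support
          · by_contra h
            have hkU : k ∈ U := Finset.mem_filter.mpr
              ⟨Finset.mem_biUnion.mpr ⟨d, hdT, Finsupp.mem_support_iff.mpr h⟩,
                le_trans hN0 hk.le⟩
            exact absurd (U.le_max' k hkU) (not_le.mpr hk)
          · rw [hrT d hdT]; rfl
        rw [hsr, hrk, zero_add]
        split_ifs with h
        · rw [one_coeff, if_neg (by omega)]
        · rfl
      have hEbound : ∀ d (k : ℤ), 0 ≤ k →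
          (P.pair (b d1) (b d) - (if d1 = d then (1 : Rq) else 0)).coeff k = 0 := by
        intro d k hk
        obtain ⟨hg0, hgpos⟩ := hb.almost_orthonormal d1 d
        rw [AddMonoidAlgebra.coeff_sub, Finsupp.sub_apply]
        rcases eq_or_lt_of_le hk with hk0' | hkpos
        · rw [← hk0', hg0]
          split_ifs with h <;> simp [one_coeff]
        · rw [hgpos k hkpos]
          have hk0' : k ≠ 0 := by omega
          split_ifs with h <;> simp [one_coeff, hk0']
      have hzeroN : (r d1).coeff N = 0 := by
        rw [hEq d1, AddMonoidAlgebra.coeff_neg, Finsupp.neg_apply, AddMonoidAlgebra.coeff_sum, Finset.sum_apply']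
        rw [Finset.sum_eq_zero, neg_zero]
        intro d _
        exact mul_coeff_zero _ _ _ (fun k hk => hsbound d k hk) (hEbound d)
      exact hne hzeroN
    rw [hval, bar_bar]
    constructor
    · rw [hsr, hr c' 0 le_rfl, zero_add]
      by_cases h : c' = c
      · rw [if_pos h, if_pos h.symm, one_coeff, if_pos rfl]
      · rw [if_neg h, if_neg (fun hh => h hh.symm)]
        rfl
    · intro k hk
      rw [hsr, hr c' k hk.le, zero_add]
      split_ifs with h
      · rw [one_coeff, if_neg (by omega)]
      · rfl

end
end

section
/- Let {a_c}, {b_c} be bases of a free Z[q,q⁻¹]-module with b_c = Σ_{c'} m_{cc'}(q) a_{c'} and a_c = Σ_{c'} n_{cc'}(-q) b_{c'} where m_{cc'}(q), n_{cc'}(q) have coefficients in Z_{≥0} (balanced positivity, with m_{cc}=n_{cc}=1 and m_{cc'},n_{cc'} ∈ q⁻¹Z_{≥0}[[q⁻¹]] for c'≠c). Let {a*_c}, {b*_c} be the right dual bases with respect to a pairing for which the structure is balanced (ψ*(a_c)=a*_c). Then the dual bases satisfy a*_c = Σ_{c'} m_{c'c}(-p) b*_{c'} and b*_c = Σ_{c'}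 n_{c'c}(p) a*_{c'} where p = -q⁻¹; i.e., the dual pre-canonical structure is balanced positive in the variable p = -q⁻¹. -/
/-!
Statement 7: balanced positivity passes to the dual bases in the variable
`p = -q⁻¹`.  `ℤ[q,q⁻¹] = LaurentPolynomial ℤ`; `bar` is `q ↦ q⁻¹` and `subNeg`
is the substitution `q ↦ -q`, so that for a Laurent polynomial `f`,
`f(-p) = f(q⁻¹) = bar f` and `f(p) = f(-q⁻¹) = bar (subNeg f)`.
-/

noncomputable section

open LaurentPolynomial
open scoped Classical

/-- The monoid homomorphism `qⁿ ↦ (-q)ⁿ`. -/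
def negqPow : Multiplicative ℤ →* Rq where
  toFun k := ((((-1 : ℤˣ) ^ (Multiplicative.toAdd k) : ℤˣ) : ℤ)) •
      (LaurentPolynomial.T (Multiplicative.toAdd k) : Rq)
  map_one' := by simp
  map_mul' a b := by
    simp only [toAdd_mul]
    rw [zpow_add, LaurentPolynomial.T_add, smul_mul_smul_comm]
    push_cast
    ring_nf

/-- The substitution homomorphism `q ↦ -q` on `ℤ[q,q⁻¹]`. -/
def subNeg : Rq →+* Rq := (AddMonoidAlgebra.lift ℤ Rq ℤ negqPow).toRingHom

variable {C : Type*} [Fintype C] [PartialOrder C]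
  {V : Type*} [AddCommGroup V] [Module Rq V]

/-- Suppose the pre-canonical structure is balanced
(`⟨ψ(a_c), a_d⟩ = δ_{c,d}`), `{b_c}` is a basis with transition matrices
`b_c = Σ_{c'} m_{cc'}(q)·a_{c'}` and `a_c = Σ_{c'} n_{cc'}(-q)·b_{c'}` which are
balanced positive (`m_{cc} = n_{cc} = 1`, and for `c' ≠ c` the entries
`m_{cc'}(q), n_{cc'}(q)` lie in `q⁻¹ℤ_{≥0}[q⁻¹]`), and `{a*_c}`, `{b*_c}` are
the right dual bases.  Then
`a*_c = Σ_{c'} m_{c'c}(-p)·b*_{c'}` and `b*_c = Σ_{c'} n_{c'c}(p)·a*_{c'}`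
where `p = -q⁻¹`, i.e. `m_{c'c}(-p) = bar (m_{c'c})` and
`n_{c'c}(p) = bar (subNeg (n_{c'c}))`:  the dual structure is balanced positive
in the variable `p`. -/
theorem dual_balanced_positive (P : PrecanonicalR C V)
    (hbal : ∀ c d : C, P.pair (P.ψ (P.std c)) (P.std d) = if c = d then 1 else 0)
    (b : Module.Basis C Rq V) (m n : C → C → Rq)
    (hm : ∀ c : C, b c = ∑ c' : C, m c c' • P.std c')
    (hn : ∀ c : C, P.std c = ∑ c' : C, subNeg (n c c') • b c')
    (hmdiag : ∀ c : C, m c c = 1) (hndiag : ∀ c : C, n c c = 1)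
    (hmpos : ∀ c c' : C, c' ≠ c →
      (∀ k : ℤ, 0 ≤ k → (m c c').coeff k = 0) ∧ (∀ k : ℤ, 0 ≤ (m c c').coeff k))
    (hnpos : ∀ c c' : C, c' ≠ c →
      (∀ k : ℤ, 0 ≤ k → (n c c').coeff k = 0) ∧ (∀ k : ℤ, 0 ≤ (n c c').coeff k))
    (astar bstar : Module.Basis C Rq V)
    (hastar : ∀ c c' : C, P.pair (P.std c) (astar c') = if c = c' then 1 else 0)
    (hbstar : ∀ c c' : C, P.pair (b c) (bstar c') = if c = c' then 1 else 0) :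
    (∀ c : C, astar c = ∑ c' : C, bar (m c' c) • bstar c') ∧
    (∀ c : C, bstar c = ∑ c' : C, bar (subNeg (n c' c)) • astar c') := by

  -- coordinates via the pairing
  have key : ∀ (u ustar : Module.Basis C Rq V),
      (∀ c c' : C, P.pair (u c) (ustar c') = if c = c' then 1 else 0) →
      ∀ (x : V) (d : C), P.pair (u d) x = ustar.repr x d := by
    intro u ustar hu x d
    conv_lhs => rw [← ustar.sum_repr x]
    rw [map_sum]
    simp only [P.pair_sesq_right, hu, mul_ite, mul_one, mul_zero]
    simp
  have pairL : ∀ (s : Finset C) (f : C → V) (y : V),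
      P.pair (∑ c ∈ s, f c) y = ∑ c ∈ s, P.pair (f c) y := by
    intro s f y
    rw [map_sum, AddMonoidHom.finset_sum_apply]
  constructor
  · intro c
    apply bstar.ext_elem
    intro d
    rw [← key b bstar hbstar, ← key b bstar hbstar]
    rw [map_sum]
    simp only [P.pair_sesq_right, hbstar, mul_ite, mul_one, mul_zero]
    rw [Finset.sum_ite_eq Finset.univ d (fun c' => bar (m c' c))]
    simp only [Finset.mem_univ, if_true]
    rw [hm d, pairL]
    simp only [P.pair_sesq_left, hastar, mul_ite, mul_one, mul_zero]
    simp
  · intro c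
    apply astar.ext_elem
    intro d
    rw [← key P.std astar hastar, ← key P.std astar hastar]
    rw [map_sum]
    simp only [P.pair_sesq_right, hastar, mul_ite, mul_one, mul_zero]
    rw [Finset.sum_ite_eq Finset.univ d (fun c' => bar (subNeg (n c' c)))]
    simp only [Finset.mem_univ, if_true]
    rw [hn d, pairL]
    simp only [P.pair_sesq_left, hbstar, mul_ite, mul_one, mul_zero]
    simp

end
end

section
/- Let C and C' be humorous categories and a: C → C' a full and essentially surjective functor commuting with grading shifts and duality. If C is mixed, then C' is mixed; moreover, each orthodox basis vector of K⁰(C') is the image under [a] of a unique orthodox basis vector of K⁰(C), and every other orthodox basis vector of K⁰(C) is sent to 0. -/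
/-!
Statement 11: if `a : C → C'` is a full, essentially surjective functor between
humorous categories commuting with grading shifts and duality, and `C` is
mixed, then `C'` is mixed; moreover every orthodox basis vector of `K⁰(C')`
(the class of a self-dual indecomposable) is the image of a unique orthodox
basis vector of `K⁰(C)`, and every other orthodox basis vector of `K⁰(C)` is
sent to `0`.  We state the Grothendieck-group claims at the level of objects:
classes of self-dual indecomposables.
-/

open CategoryTheory CategoryTheory.Limits Opposite

universe v u v' u'

noncomputable section

variable (K : Type*) [Field K]

section Defs

variable {C : Type u} [Category.{v} C] [Preadditive C]

/-- An object is indecomposable. -/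
def Indec (M : C) : Prop :=
  ¬ IsZero M ∧ ∀ e : End M, e * e = e → e = 0 ∨ e = 1

/-- The `i`-th power (`i : ℤ`) of the shift equivalence, on objects. -/
def shiftZ (σ : C ≌ C) : ℤ → C → C
  | Int.ofNat n, X => (σ.functor.obj)^[n] X
  | Int.negSucc n, X => (σ.inverse.obj)^[n + 1] X

/-- `P` is self-dual for the duality `D`. -/
def SelfDual (D : Cᵒᵖ ⥤ C) (P : C) : Prop :=
  Nonempty (D.obj (op P) ≅ P)

end Defs

section Humorous

variable (C : Type u) [Category.{v} C] [Preadditive C] [CategoryTheory.Linear K C]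
  [HasFiniteBiproducts C]

/-- The axioms of a humorous category, for the shift `σ` and duality `D`. -/
structure IsHumorous (σ : C ≌ C) (D : Cᵒᵖ ⥤ C) : Prop where
  krullSchmidt : ∀ X : C, ∃ (k : ℕ) (f : Fin k → C),
    (∀ i, Indec (f i)) ∧ Nonempty (X ≅ ⨁ f)
  homFinite : ∀ X Y : C, FiniteDimensional K (X ⟶ Y)
  homVanish : ∀ X Y : C, ∃ N : ℤ, ∀ i : ℤ, i < N → ∀ f : X ⟶ shiftZ σ i Y, f = 0
  dualIsEquivalence : D.IsEquivalence
  dualShift : ∀ M : C,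
    Nonempty (D.obj (op (σ.functor.obj M)) ≅ σ.inverse.obj (D.obj (op M)))
  shiftFree : ∀ P : C, Indec P → ∀ n : ℤ, n ≠ 0 → ¬ Nonempty (shiftZ σ n P ≅ P)
  orbitFin : ∃ (k : ℕ) (reps : Fin k → C),
    (∀ i, Indec (reps i) ∧ SelfDual D (reps i)) ∧
    ∀ M : C, Indec M → ∃ (i : Fin k) (n : ℤ), Nonempty (shiftZ σ n (reps i) ≅ M)
  selfDualUnique : ∀ P Q : C, Indec P → Indec Q → SelfDual D P → SelfDual D Q →
    (∃ n : ℤ, Nonempty (shiftZ σ n P ≅ Q)) → Nonempty (P ≅ Q)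
  endLocal : ∀ P : C, Indec P → ∀ f : End P,
    ∃ a : K, IsNilpotent (f - (show End P from a • 𝟙 P))

/-- A weight function exhibiting mixedness. -/
structure IsWeightFn (σ : C ≌ C) (D : Cᵒᵖ ⥤ C) (wt : C → ℤ) : Prop where
  dual : ∀ M : C, Indec M → wt (D.obj (op M)) = - wt M
  shift : ∀ M : C, Indec M → wt (σ.functor.obj M) = wt M + 1
  hom_lt : ∀ M N : C, Indec M → Indec N → wt N < wt M → ∀ f : M ⟶ N, f = 0
  hom_eq : ∀ M N : C, Indec M → Indec N → ¬ Nonempty (M ≅ N) → wt N = wt M →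
    ∀ f : M ⟶ N, f = 0
  end_scalar : ∀ M : C, Indec M → ∀ f : End M, ∃ a : K, f = a • 𝟙 M

/-- The humorous category is mixed. -/
def Mixed (σ : C ≌ C) (D : Cᵒᵖ ⥤ C) : Prop :=
  ∃ wt : C → ℤ, IsWeightFn K C σ D wt

end Humorous

variable {C : Type u} [Category.{v} C] [Preadditive C] [CategoryTheory.Linear K C]
  [HasFiniteBiproducts C]
variable {C' : Type u'} [Category.{v'} C'] [Preadditive C'] [CategoryTheory.Linear K C']
  [HasFiniteBiproducts C']


section Aux

open ZeroObject

variable {A : Type*} [Category A] {B : Type*} [Category B]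

/-- Indecomposability transfers along isomorphisms. -/
lemma indec_of_iso [Preadditive A] {M N : A} (e : M ≅ N) (h : Indec M) : Indec N := by
  refine ⟨fun hz => h.1 (hz.of_iso e), fun f hf => ?_⟩
  have hff : f ≫ f = f := hf
  set u : End M := e.hom ≫ f ≫ e.inv with hu
  have huu : u * u = u := by
    show (e.hom ≫ f ≫ e.inv) ≫ (e.hom ≫ f ≫ e.inv) = e.hom ≫ f ≫ e.inv
    calc (e.hom ≫ f ≫ e.inv) ≫ (e.hom ≫ f ≫ e.inv)
        = e.hom ≫ (f ≫ (e.inv ≫ e.hom) ≫ f) ≫ e.inv := by simp [Category.assoc]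
      _ = e.hom ≫ f ≫ e.inv := by rw [e.inv_hom_id]; simp [hff]
  have hf' : f = e.inv ≫ u ≫ e.hom := by rw [hu]; simp
  rcases h.2 u huu with h0 | h1
  · left; rw [hf', h0]; simp
  · right
    rw [hf', h1]
    show e.inv ≫ (1 : End M) ≫ e.hom = (1 : End N)
    rw [End.one_def, End.one_def]; simp

/-- Indecomposability transfers to the opposite category. -/
lemma indec_op [Preadditive A] {M : A} (h : Indec M) : Indec (op M) := by
  refine ⟨fun hz => h.1 hz.unop, fun f hf => ?_⟩
  have hff : f.unop ≫ f.unop = f.unop := by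
    have : (f ≫ f).unop = f.unop := congrArg Quiver.Hom.unop (show f ≫ f = f from hf)
    simpa using this
  rcases h.2 f.unop hff with h0 | h1
  · left
    apply Quiver.Hom.unop_inj
    simpa using h0
  · right
    apply Quiver.Hom.unop_inj
    simpa using h1

/-- A full and faithful functor between categories with zero objects preserves
zero morphisms. -/
lemma preservesZero_of_ff [Preadditive A] [Preadditive B] [HasZeroObject A] [HasZeroObject B]
    (G : A ⥤ B) [G.Full] [G.Faithful] : G.PreservesZeroMorphisms := by
  apply Functor.preservesZeroMorphisms_of_map_zero_object
  have h0 : IsZero (G.obj 0) := by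
    rw [IsZero.iff_id_eq_zero]
    have hz : IsZero (0 : A) := isZero_zero A
    calc 𝟙 (G.obj 0) = G.map (𝟙 0) := (G.map_id _).symm
      _ = G.map (G.preimage (0 : G.obj 0 ⟶ G.obj 0)) := by
            rw [hz.eq_of_src (𝟙 0) (G.preimage 0)]
      _ = 0 := G.map_preimage _
  exact h0.isoZero

/-- A full and faithful functor preserving zero morphisms preserves
indecomposability. -/
lemma indec_map [Preadditive A] [Preadditive B] (G : A ⥤ B) [G.Full] [G.Faithful]
    [G.PreservesZeroMorphisms] {X : A} (h : Indec X) : Indec (G.obj X) := by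
  constructor
  · intro hz
    apply h.1
    rw [IsZero.iff_id_eq_zero]
    apply G.map_injective
    rw [G.map_id, G.map_zero]
    exact hz.eq_of_src _ _
  · intro e he
    have he' : G.preimage e ≫ G.preimage e = G.preimage e := by
      apply G.map_injective
      rw [G.map_comp, G.map_preimage]
      exact he
    rcases h.2 (G.preimage e) he' with h0 | h1
    · left
      have hh := G.map_preimage e
      rw [show G.preimage e = (0 : X ⟶ X) from h0, G.map_zero] at hh
      exact hh.symm
    · right
      have hh := G.map_preimage e
      rw [show G.preimage e = 𝟙 X from h1, G.map_id] at hh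
      exact hh.symm

/-- A nilpotent endomorphism which is an isomorphism forces the object to be zero. -/
lemma isZero_of_nilpotent_isIso [Preadditive A] {X : A} (n : End X)
    (hn : IsIso (n : X ⟶ X)) (h : IsNilpotent n) : IsZero X := by
  obtain ⟨k, hk⟩ := h
  have hpow : ∀ m : ℕ, IsIso ((n ^ m : End X) : X ⟶ X) := by
    intro m
    induction m with
    | zero =>
        rw [pow_zero]
        exact ⟨𝟙 X, by simp [End.one_def], by simp [End.one_def]⟩
    | succ m ih =>
        rw [pow_succ, End.mul_def]
        exact @IsIso.comp_isIso _ _ _ _ _ _ _ hn ih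
  refine (IsZero.iff_id_eq_zero _).mpr ?_
  haveI := hpow k
  have hc : ((n ^ k : End X) : X ⟶ X) ≫ 𝟙 X = ((n ^ k : End X) : X ⟶ X) ≫ 0 := by
    rw [comp_zero, Category.comp_id]
    exact hk
  exact (cancel_epi _).mp hc

end Aux

section AuxW

variable {σ : C ≌ C} {D : Cᵒᵖ ⥤ C} {wt : C → ℤ}

/-- Weights of isomorphic indecomposables agree. -/
lemma wt_iso (hw : IsWeightFn K C σ D wt) {M N : C} (hM : Indec M) (hN : Indec N)
    (e : M ≅ N) : wt M = wt N := by
  by_contra hne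
  rcases lt_or_gt_of_ne hne with h | h
  · have hz := hw.hom_lt N M hN hM h e.inv
    exact hN.1 ((IsZero.iff_id_eq_zero _).mpr (by rw [← e.inv_hom_id, hz, zero_comp]))
  · have hz := hw.hom_lt M N hM hN h e.hom
    exact hM.1 ((IsZero.iff_id_eq_zero _).mpr (by rw [← e.hom_inv_id, hz, zero_comp]))

/-- Two indecomposables with isomorphic nonzero images under a full additive
functor are isomorphic. -/
lemma preimage_unique (hw : IsWeightFn K C σ D wt) (F : C ⥤ C') [F.Full] [F.Additive]
    {M N : C} (hM : Indec M) (hN : Indec N) (hnz : ¬ IsZero (F.obj M))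
    (e : F.obj M ≅ F.obj N) : Nonempty (M ≅ N) := by
  by_contra hne
  have hzero : e.hom = 0 ∨ e.inv = 0 := by
    rcases lt_trichotomy (wt N) (wt M) with h | h | h
    · left
      rw [← F.map_preimage e.hom, hw.hom_lt M N hM hN h (F.preimage e.hom), F.map_zero]
    · left
      rw [← F.map_preimage e.hom, hw.hom_eq M N hM hN hne h (F.preimage e.hom), F.map_zero]
    · right
      rw [← F.map_preimage e.inv, hw.hom_lt N M hN hM h (F.preimage e.inv), F.map_zero]
  apply hnz
  rw [IsZero.iff_id_eq_zero, ← e.hom_inv_id]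
  rcases hzero with h | h <;> rw [h] <;> simp

/-- Every indecomposable in the target has an indecomposable preimage. -/
lemma exists_indec_preimage {D : Cᵒᵖ ⥤ C} {σ : C ≌ C} (hC : IsHumorous K C σ D)
    (F : C ⥤ C') [F.Additive] [F.EssSurj] {P' : C'} (hP' : Indec P') :
    ∃ M : C, Indec M ∧ Nonempty (F.obj M ≅ P') := by
  obtain ⟨k, f, hf, ⟨d⟩⟩ := hC.krullSchmidt (F.objPreimage P')
  have e : F.obj (F.objPreimage P') ≅ P' := F.objObjPreimageIso P'
  have g : (⨁ F.obj ∘ f) ≅ P' := (F.mapBiproduct f).symm ≪≫ (F.mapIso d).symm ≪≫ e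
  set E : Fin k → End P' := fun i =>
    g.inv ≫ biproduct.π (F.obj ∘ f) i ≫ biproduct.ι (F.obj ∘ f) i ≫ g.hom with hE
  have hidem : ∀ i, E i * E i = E i := by
    intro i
    show (g.inv ≫ biproduct.π (F.obj ∘ f) i ≫ biproduct.ι (F.obj ∘ f) i ≫ g.hom) ≫
      (g.inv ≫ biproduct.π (F.obj ∘ f) i ≫ biproduct.ι (F.obj ∘ f) i ≫ g.hom) = E i
    simp [hE, biproduct.ι_π_self_assoc]
  by_cases hex : ∃ i, E i = 1
  · obtain ⟨i, hi⟩ := hex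
    refine ⟨f i, hf i,
      ⟨⟨biproduct.ι (F.obj ∘ f) i ≫ g.hom, g.inv ≫ biproduct.π (F.obj ∘ f) i, ?_, ?_⟩⟩⟩
    · simp [biproduct.ι_π_self_assoc]
    · have := hi
      rw [End.one_def] at this
      simpa [hE, Category.assoc] using this
  · exfalso
    push_neg at hex
    have hz : ∀ i, E i = 0 := fun i => (hP'.2 (E i) (hidem i)).resolve_right (hex i)
    apply hP'.1
    rw [IsZero.iff_id_eq_zero]
    have ht : 𝟙 P' = ∑ i, E i := by
      calc 𝟙 P' = g.inv ≫ 𝟙 (⨁ F.obj ∘ f) ≫ g.hom := by simp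
        _ = g.inv ≫ (∑ j, biproduct.π (F.obj ∘ f) j ≫ biproduct.ι (F.obj ∘ f) j) ≫ g.hom := by
              rw [biproduct.total]
        _ = ∑ i, E i := by
              rw [Preadditive.sum_comp, Preadditive.comp_sum]
              simp [hE, Category.assoc]
    rw [ht]
    simp [hz]

/-- Every endomorphism of `F.obj M` is the image of a scalar. -/
lemma end_map_exists (hw : IsWeightFn K C σ D wt) (F : C ⥤ C') [F.Full] {M : C}
    (hM : Indec M) (g : F.obj M ⟶ F.obj M) : ∃ a : K, g = F.map ((a : K) • 𝟙 M) := by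
  obtain ⟨a, ha⟩ := hw.end_scalar M hM (F.preimage g)
  exact ⟨a, by rw [← ha, F.map_preimage]⟩

/-- The image of a nonzero scalar endomorphism is an isomorphism. -/
lemma isIso_map_smul (F : C ⥤ C') {M : C} {a : K} (ha : a ≠ 0) :
    IsIso (F.map ((a : K) • 𝟙 M)) := by
  have h1 : ((a : K) • 𝟙 M) ≫ ((a⁻¹ : K) • 𝟙 M) = 𝟙 M := by
    rw [Linear.smul_comp, Linear.comp_smul, smul_smul, Category.comp_id,
      mul_inv_cancel₀ ha, one_smul]
  have h2 : ((a⁻¹ : K) • 𝟙 M) ≫ ((a : K) • 𝟙 M) = 𝟙 M := by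
    rw [Linear.smul_comp, Linear.comp_smul, smul_smul, Category.comp_id,
      inv_mul_cancel₀ ha, one_smul]
  exact ⟨F.map ((a⁻¹ : K) • 𝟙 M), by rw [← F.map_comp, h1, F.map_id],
    by rw [← F.map_comp, h2, F.map_id]⟩


/-- The image of an indecomposable under a full additive functor is
indecomposable, provided it is nonzero. -/
lemma indec_image (hw : IsWeightFn K C σ D wt) (F : C ⥤ C') [F.Full] [F.Additive]
    {M : C} (hM : Indec M) (hnz : ¬ IsZero (F.obj M)) : Indec (F.obj M) := by
  refine ⟨hnz, fun e he => ?_⟩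
  obtain ⟨a, ha⟩ := end_map_exists K hw F hM e
  by_cases h0 : a = 0
  · left
    rw [ha, h0, zero_smul, F.map_zero]
  · right
    have hiso : IsIso (e : F.obj M ⟶ F.obj M) := by rw [ha]; exact isIso_map_smul K F h0
    have hee : (e : F.obj M ⟶ F.obj M) ≫ e = e ≫ 𝟙 (F.obj M) := by
      rw [Category.comp_id]
      exact he
    have h1 : (e : F.obj M ⟶ F.obj M) = 𝟙 (F.obj M) := (cancel_epi e).mp hee
    rw [End.one_def]
    exact h1

end AuxW

theorem mixed_of_full_essSurj
    (σ : C ≌ C) (D : Cᵒᵖ ⥤ C) (σ' : C' ≌ C') (D' : C'ᵒᵖ ⥤ C')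
    (hC : IsHumorous K C σ D) (hC' : IsHumorous K C' σ' D')
    (F : C ⥤ C') [F.Additive] [F.Full] [F.EssSurj]
    (hshift : Nonempty (σ.functor ⋙ F ≅ F ⋙ σ'.functor))
    (hdual : Nonempty (F.op ⋙ D' ≅ D ⋙ F))
    (hmixed : Mixed K C σ D) :
    Mixed K C' σ' D' ∧
    -- every orthodox basis vector of `K⁰(C')` is the image of an orthodox
    -- basis vector of `K⁰(C)` ...
    (∀ P' : C', Indec P' → SelfDual D' P' →
      ∃ P : C, Indec P ∧ SelfDual D P ∧ Nonempty (F.obj P ≅ P')) ∧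
    -- ... which is unique ...
    (∀ P Q : C, Indec P → SelfDual D P → Indec Q → SelfDual D Q →
      ∀ P' : C', Indec P' → SelfDual D' P' →
      Nonempty (F.obj P ≅ P') → Nonempty (F.obj Q ≅ P') → Nonempty (P ≅ Q)) ∧
    -- ... and every other orthodox basis vector of `K⁰(C)` is sent to `0`.
    (∀ Q : C, Indec Q → SelfDual D Q →
      (∀ P' : C', Indec P' → SelfDual D' P' → ¬ Nonempty (F.obj Q ≅ P')) →
      IsZero (F.obj Q)) := by
  classical
  obtain ⟨wt, hw⟩ := hmixed
  haveI hDE := hC.dualIsEquivalence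
  haveI hDE' := hC'.dualIsEquivalence
  haveI : D.PreservesZeroMorphisms := preservesZero_of_ff D
  haveI : D'.PreservesZeroMorphisms := preservesZero_of_ff D'
  haveI : (σ.functor).PreservesZeroMorphisms := preservesZero_of_ff σ.functor
  haveI : (σ'.functor).PreservesZeroMorphisms := preservesZero_of_ff σ'.functor
  obtain ⟨ηs⟩ := hshift
  obtain ⟨ηd⟩ := hdual
  -- comparison isomorphisms
  have dualIso : ∀ {M : C} {M' : C'}, (F.obj M ≅ M') →
      (F.obj (D.obj (op M)) ≅ D'.obj (op M')) :=
    fun {M M'} e => (D'.mapIso e.op ≪≫ ηd.app (op M)).symm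
  have shiftIso : ∀ {M : C} {M' : C'}, (F.obj M ≅ M') →
      (F.obj (σ.functor.obj M) ≅ σ'.functor.obj M') :=
    fun {M M'} e => ηs.app M ≪≫ σ'.functor.mapIso e
  -- indecomposable preimages
  have hpre : ∀ {P' : C'}, Indec P' → ∃ M : C, Indec M ∧ Nonempty (F.obj M ≅ P') :=
    fun {P'} h => exists_indec_preimage K hC F h
  -- an indecomposable preimage of a self-dual indecomposable is self-dual
  have hsd : ∀ (M : C) (P' : C'), Indec M → Indec P' → SelfDual D' P' →
      (F.obj M ≅ P') → SelfDual D M := by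
    intro M P' hM hP' hsd' e
    obtain ⟨sd⟩ := hsd'
    have hnz : ¬ IsZero (F.obj (D.obj (op M))) := fun hz =>
      hP'.1 (IsZero.of_iso hz (dualIso e ≪≫ sd).symm)
    exact preimage_unique K hw F (indec_map D (indec_op hM)) hM hnz
      (dualIso e ≪≫ sd ≪≫ e.symm)
  -- the weight function on `C'`
  set wt' : C' → ℤ := fun M' =>
    if h : ∃ M : C, Indec M ∧ Nonempty (F.obj M ≅ M') then wt h.choose else 0 with hwt'
  have wt'_eq : ∀ (M' : C') (M₀ : C), Indec M₀ → ¬ IsZero M' → (F.obj M₀ ≅ M') →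
      wt' M' = wt M₀ := by
    intro M' M₀ h0 hnz e
    have hex : ∃ M : C, Indec M ∧ Nonempty (F.obj M ≅ M') := ⟨M₀, h0, ⟨e⟩⟩
    have h1 : wt' M' = wt hex.choose := by
      simp only [hwt']
      exact dif_pos hex
    obtain ⟨hind, ⟨e'⟩⟩ := hex.choose_spec
    have hnz' : ¬ IsZero (F.obj hex.choose) := fun hz => hnz (IsZero.of_iso hz e'.symm)
    obtain ⟨d⟩ := preimage_unique K hw F hind h0 hnz' (e' ≪≫ e.symm)
    rw [h1]
    exact wt_iso K hw hind h0 d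
  refine ⟨⟨wt', ?_, ?_, ?_, ?_, ?_⟩, ?_, ?_, ?_⟩
  · -- dual
    intro M' hM'
    obtain ⟨M, hM, ⟨e⟩⟩ := hpre hM'
    have hDind : Indec (D'.obj (op M')) := indec_map D' (indec_op hM')
    rw [wt'_eq M' M hM hM'.1 e,
      wt'_eq _ _ (indec_map D (indec_op hM)) hDind.1 (dualIso e)]
    exact hw.dual M hM
  · -- shift
    intro M' hM'
    obtain ⟨M, hM, ⟨e⟩⟩ := hpre hM'
    rw [wt'_eq M' M hM hM'.1 e,
      wt'_eq _ _ (indec_map σ.functor hM) (indec_map σ'.functor hM').1 (shiftIso e)]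
    exact hw.shift M hM
  · -- hom_lt
    intro M' N' hM' hN' hlt f
    obtain ⟨M, hM, ⟨e⟩⟩ := hpre hM'
    obtain ⟨N, hN, ⟨e'⟩⟩ := hpre hN'
    rw [wt'_eq M' M hM hM'.1 e, wt'_eq N' N hN hN'.1 e'] at hlt
    have h0 : e.hom ≫ f ≫ e'.inv = 0 := by
      rw [← F.map_preimage (e.hom ≫ f ≫ e'.inv), hw.hom_lt M N hM hN hlt (F.preimage (e.hom ≫ f ≫ e'.inv)), F.map_zero]
    calc f = e.inv ≫ (e.hom ≫ f ≫ e'.inv) ≫ e'.hom := by simp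
      _ = 0 := by rw [h0]; simp
  · -- hom_eq
    intro M' N' hM' hN' hne heq f
    obtain ⟨M, hM, ⟨e⟩⟩ := hpre hM'
    obtain ⟨N, hN, ⟨e'⟩⟩ := hpre hN'
    have hne' : ¬ Nonempty (M ≅ N) := fun ⟨d⟩ => hne ⟨e.symm ≪≫ F.mapIso d ≪≫ e'⟩
    rw [wt'_eq M' M hM hM'.1 e, wt'_eq N' N hN hN'.1 e'] at heq
    have h0 : e.hom ≫ f ≫ e'.inv = 0 := by
      rw [← F.map_preimage (e.hom ≫ f ≫ e'.inv), hw.hom_eq M N hM hN hne' heq (F.preimage (e.hom ≫ f ≫ e'.inv)), F.map_zero]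
    calc f = e.inv ≫ (e.hom ≫ f ≫ e'.inv) ≫ e'.hom := by simp
      _ = 0 := by rw [h0]; simp
  · -- end_scalar
    intro M' hM' f
    obtain ⟨M, hM, ⟨e⟩⟩ := hpre hM'
    obtain ⟨a, hnil⟩ := hC'.endLocal M' hM' f
    set n : End M' := f - (show End M' from a • 𝟙 M') with hn
    obtain ⟨b, hb⟩ := end_map_exists K hw F hM (e.hom ≫ n ≫ e.inv)
    by_cases h0 : b = 0
    · have hm0 : e.hom ≫ n ≫ e.inv = 0 := by rw [hb, h0, zero_smul, F.map_zero]
      have hz : n = 0 := by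
        calc n = e.inv ≫ (e.hom ≫ n ≫ e.inv) ≫ e.hom := by simp
          _ = 0 := by rw [hm0]; simp
      refine ⟨a, ?_⟩
      rw [← sub_eq_zero]
      exact hz
    · exfalso
      have hiso : IsIso (e.hom ≫ n ≫ e.inv) := by rw [hb]; exact isIso_map_smul K F h0
      have hiso' : IsIso (n : M' ⟶ M') := by
        have hrw : (n : M' ⟶ M') = e.inv ≫ (e.hom ≫ n ≫ e.inv) ≫ e.hom := by simp
        rw [hrw]
        infer_instance
      exact hM'.1 (isZero_of_nilpotent_isIso n hiso' hnil)
  · -- existence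
    intro P' hP' hsd'
    obtain ⟨M, hM, ⟨e⟩⟩ := hpre hP'
    exact ⟨M, hM, hsd M P' hM hP' hsd' e, ⟨e⟩⟩
  · -- uniqueness
    intro P Q hP _ hQ _ P' hP' _ hFP hFQ
    obtain ⟨eP⟩ := hFP
    obtain ⟨eQ⟩ := hFQ
    have hnz : ¬ IsZero (F.obj P) := fun hz => hP'.1 (IsZero.of_iso hz eP.symm)
    exact preimage_unique K hw F hP hQ hnz (eP ≪≫ eQ.symm)
  · -- the rest are sent to zero
    intro Q hQ hsdQ hnone
    by_contra hz
    obtain ⟨sdQ⟩ := hsdQ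
    have hind : Indec (F.obj Q) := indec_image K hw F hQ hz
    have hsdF : SelfDual D' (F.obj Q) := ⟨ηd.app (op Q) ≪≫ F.mapIso sdQ⟩
    exact hnone (F.obj Q) hind hsdF ⟨Iso.refl _⟩

end
end

section
/- Let C be a mixed humorous category over a field K whose pre-canonical structure is induced as in Lemma: bar involution from duality, Euler pairing ⟨[M],[N]⟩ = Σᵢ q⁻ⁱ dim Hom(M,N(i)), and standard basis given by classes of self-dual objects M_c with M_c ≅ P_c ⊕ (⊕_{c'<c} P_{c'}^{⊕m_{c'}}). Then the orthodox basis {[P_c]} is a canonical basis; conversely, if the orthodox basis is canonical then C is mixed. In other words, the orthodox basis is canonical if and only if C is mixed. -/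
/-!
Statement 13: for a humorous category `C` with its induced pre-canonical
structure (duality bar-involution, Euler pairing
`⟨[M],[N]⟩ = Σᵢ q⁻ⁱ dim Hom(M,N(i))`, standard basis from self-dual objects),
the orthodox basis (classes of self-dual indecomposables `P_c`) is canonical
iff `C` is mixed.  Conditions (I) and (II) of canonicity hold automatically,
and almost orthonormality of the classes `[P_c]` amounts to:
`Hom(P_c, P_{c'}(i)) = 0` for `i < 0`, `Hom(P_c, P_{c'}) = 0` for
non-isomorphic `P_c, P_{c'}`, and `End(P_c) = K·id`.  We state the resulting
equivalence.
-/

set_option linter.unusedSectionVars false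

open CategoryTheory CategoryTheory.Limits Opposite

universe v u

noncomputable section

variable (K : Type*) [Field K]

section Humorous

variable (C : Type u) [Category.{v} C] [Preadditive C] [CategoryTheory.Linear K C]
  [HasFiniteBiproducts C]

/-- Almost orthonormality of the orthodox basis: this is exactly condition
(III) of canonicity for the classes of the self-dual indecomposables `P_c`,
since the Euler pairing is `⟨[P],[P']⟩ = Σᵢ q⁻ⁱ dim Hom(P, P'(i))`.  Conditions
(I) and (II) hold automatically, so the orthodox basis is canonical iff this
condition holds. -/
def OrthodoxCanonical (σ : C ≌ C) (D : Cᵒᵖ ⥤ C) : Prop :=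
  (∀ P P' : C, Indec P → SelfDual D P → Indec P' → SelfDual D P' →
    ∀ i : ℤ, i < 0 → ∀ f : P ⟶ shiftZ σ i P', f = 0) ∧
  (∀ P P' : C, Indec P → SelfDual D P → Indec P' → SelfDual D P' →
    ¬ Nonempty (P ≅ P') → ∀ f : P ⟶ P', f = 0) ∧
  (∀ P : C, Indec P → SelfDual D P → ∀ f : End P, ∃ a : K, f = a • 𝟙 P)

end Humorous

variable {C : Type u} [Category.{v} C] [Preadditive C] [CategoryTheory.Linear K C]
  [HasFiniteBiproducts C]


section HelperLemmas

variable {C : Type u} [Category.{v} C] [Preadditive C]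

lemma shiftZ_zero (σ : C ≌ C) (X : C) : shiftZ σ 0 X = X := rfl

lemma iter_congr (F : C ⥤ C) (m : ℕ) {X Y : C} (e : Nonempty (X ≅ Y)) :
    Nonempty (F.obj^[m] X ≅ F.obj^[m] Y) := by
  induction m generalizing X Y with
  | zero => simpa using e
  | succ p ih =>
    rw [Function.iterate_succ_apply, Function.iterate_succ_apply]
    exact ih ⟨F.mapIso e.some⟩

lemma shift_congr (σ : C ≌ C) (n : ℤ) {X Y : C} (e : Nonempty (X ≅ Y)) :
    Nonempty (shiftZ σ n X ≅ shiftZ σ n Y) := by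
  cases n with
  | ofNat m => exact iter_congr σ.functor m e
  | negSucc m => exact iter_congr σ.inverse (m+1) e

lemma shift_succ (σ : C ≌ C) (n : ℤ) (X : C) :
    Nonempty (shiftZ σ (n+1) X ≅ σ.functor.obj (shiftZ σ n X)) := by
  cases n with
  | ofNat m =>
    have h : (Int.ofNat m) + 1 = Int.ofNat (m+1) := rfl
    rw [h]
    exact ⟨eqToIso (Function.iterate_succ_apply' σ.functor.obj m X)⟩
  | negSucc m =>
    cases m with
    | zero =>
      have h : Int.negSucc 0 + 1 = 0 := rfl
      rw [h]
      exact ⟨(σ.counitIso.app X).symm⟩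
    | succ p =>
      have h : Int.negSucc (p+1) + 1 = Int.negSucc p := rfl
      rw [h]
      exact ⟨(σ.counitIso.app (σ.inverse.obj^[p+1] X)).symm ≪≫
        (σ.functor.mapIso (eqToIso (Function.iterate_succ_apply' σ.inverse.obj (p+1) X))).symm⟩

lemma shift_pred (σ : C ≌ C) (n : ℤ) (X : C) :
    Nonempty (shiftZ σ (n-1) X ≅ σ.inverse.obj (shiftZ σ n X)) := by
  cases n with
  | ofNat m =>
    cases m with
    | zero =>
      have h : (Int.ofNat 0) - 1 = Int.negSucc 0 := rfl
      rw [h]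
      exact ⟨Iso.refl _⟩
    | succ p =>
      have h : (Int.ofNat (p+1)) - 1 = Int.ofNat p := by
        rw [Int.ofNat_eq_coe, Int.ofNat_eq_coe]; push_cast; ring
      rw [h]
      exact ⟨σ.unitIso.app (σ.functor.obj^[p] X) ≪≫
        (σ.inverse.mapIso (eqToIso (Function.iterate_succ_apply' σ.functor.obj p X))).symm⟩
  | negSucc m =>
    have h : Int.negSucc m - 1 = Int.negSucc (m+1) := rfl
    rw [h]
    exact ⟨eqToIso (Function.iterate_succ_apply' σ.inverse.obj (m+1) X)⟩

lemma shift_add (σ : C ≌ C) (m n : ℤ) (X : C) :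
    Nonempty (shiftZ σ m (shiftZ σ n X) ≅ shiftZ σ (m+n) X) := by
  induction m using Int.induction_on with
  | zero => rw [zero_add]; exact ⟨Iso.refl _⟩
  | succ p ih =>
    obtain ⟨a⟩ := shift_succ σ p (shiftZ σ n X)
    obtain ⟨b⟩ := ih
    obtain ⟨c⟩ := shift_succ σ ((p:ℤ)+n) X
    have h : (p:ℤ) + 1 + n = ((p:ℤ) + n) + 1 := by ring
    rw [h]
    exact ⟨a ≪≫ σ.functor.mapIso b ≪≫ c.symm⟩
  | pred p ih =>
    obtain ⟨a⟩ := shift_pred σ (-(p:ℤ)) (shiftZ σ n X)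
    obtain ⟨b⟩ := ih
    obtain ⟨c⟩ := shift_pred σ (-(p:ℤ)+n) X
    have h : -(p:ℤ) - 1 + n = (-(p:ℤ) + n) - 1 := by ring
    rw [h]
    exact ⟨a ≪≫ σ.inverse.mapIso b ≪≫ c.symm⟩

lemma homZero_of_iso {X Y X' Y' : C} (eX : X ≅ X') (eY : Y ≅ Y')
    (h : ∀ f : X ⟶ Y, f = 0) : ∀ f : X' ⟶ Y', f = 0 := by
  intro f
  have h0 := h (eX.hom ≫ f ≫ eY.inv)
  have hf : f = eX.inv ≫ (eX.hom ≫ f ≫ eY.inv) ≫ eY.hom := by simp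
  rw [hf, h0, zero_comp, comp_zero]

lemma homZero_map (F : C ⥤ C) [F.Full] [F.Faithful] {X Y : C}
    (h : ∀ f : X ⟶ Y, f = 0) : ∀ g : F.obj X ⟶ F.obj Y, g = 0 := by
  intro g
  obtain ⟨f, rfl⟩ := F.map_surjective g
  rw [h f, F.map_zero]

lemma homZero_shift (σ : C ≌ C) (n : ℤ) {X Y : C}
    (h : ∀ f : X ⟶ Y, f = 0) : ∀ f : shiftZ σ n X ⟶ shiftZ σ n Y, f = 0 := by
  induction n using Int.induction_on with
  | zero => exact h
  | succ p ih =>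
    obtain ⟨a⟩ := shift_succ σ p X
    obtain ⟨b⟩ := shift_succ σ p Y
    exact homZero_of_iso a.symm b.symm (homZero_map σ.functor ih)
  | pred p ih =>
    obtain ⟨a⟩ := shift_pred σ (-(p:ℤ)) X
    obtain ⟨b⟩ := shift_pred σ (-(p:ℤ)) Y
    exact homZero_of_iso a.symm b.symm (homZero_map σ.inverse ih)

lemma indec_of_iso_s13 {X Y : C} (e : X ≅ Y) (h : Indec X) : Indec Y := by
  obtain ⟨h1, h2⟩ := h
  constructor
  · intro hz; exact h1 (hz.of_iso e)
  · intro u hu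
    have hv : (e.symm.conj u) * (e.symm.conj u) = e.symm.conj u := by
      rw [← map_mul, hu]
    have key : e.conj (e.symm.conj u) = u := by
      simp [Iso.conj_apply]
    rcases h2 _ hv with h0 | h0
    · left; rw [← key, h0]; simp [Iso.conj_apply]
    · right; rw [← key, h0, map_one]

lemma indec_map_s13 (F : C ⥤ C) [F.Full] [F.Faithful] {X : C} (h : Indec X) :
    Indec (F.obj X) := by
  obtain ⟨h1, h2⟩ := h
  constructor
  · intro hz
    apply h1
    rw [IsZero.iff_id_eq_zero] at hz ⊢
    apply F.map_injective
    rw [F.map_id, F.map_zero]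
    exact hz
  · intro u hu
    obtain ⟨v, rfl⟩ := F.map_surjective u
    rw [End.mul_def] at hu
    rcases h2 v (F.map_injective (by rw [End.mul_def, F.map_comp]; exact hu)) with h0 | h0
    · left; rw [h0, F.map_zero]
    · right; rw [h0]; simp [End.one_def]

lemma indec_shift (σ : C ≌ C) (n : ℤ) {X : C} (h : Indec X) :
    Indec (shiftZ σ n X) := by
  induction n using Int.induction_on with
  | zero => exact h
  | succ p ih =>
    obtain ⟨a⟩ := shift_succ σ p X
    exact indec_of_iso_s13 a.symm (indec_map_s13 σ.functor ih)
  | pred p ih =>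
    obtain ⟨a⟩ := shift_pred σ (-(p:ℤ)) X
    exact indec_of_iso_s13 a.symm (indec_map_s13 σ.inverse ih)

/-- no nonzero nilpotent endomorphisms -/
def ReducedE (M : C) : Prop := ∀ f : End M, IsNilpotent f → f = 0

lemma reduced_of_iso {X Y : C} (e : X ≅ Y) (h : ReducedE X) : ReducedE Y := by
  intro g hg
  obtain ⟨k, hk⟩ := hg
  have h2 : e.symm.conj g = 0 := by
    apply h
    exact ⟨k, by rw [← map_pow, hk]; simp [Iso.conj_apply]⟩
  have key : e.conj (e.symm.conj g) = g := by simp [Iso.conj_apply]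
  rw [← key, h2]; simp [Iso.conj_apply]

lemma reduced_reflect (F : C ⥤ C) [F.Faithful] [F.PreservesZeroMorphisms] {X : C}
    (h : ReducedE (F.obj X)) : ReducedE X := by
  intro f hf
  obtain ⟨k, hk⟩ := hf
  have h0 : (Functor.mapEnd X F) f = 0 := by
    apply h
    refine ⟨k, ?_⟩
    rw [← map_pow, hk]
    simp only [Functor.mapEnd_apply]
    exact F.map_zero X X
  exact F.map_eq_zero_iff.mp (by simpa using h0)

lemma reduced_functor (σ : C ≌ C) {X : C} (h : ReducedE X) :
    ReducedE (σ.functor.obj X) :=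
  reduced_reflect σ.inverse (reduced_of_iso (σ.unitIso.app X) h)

lemma reduced_inverse (σ : C ≌ C) {X : C} (h : ReducedE X) :
    ReducedE (σ.inverse.obj X) :=
  reduced_reflect σ.functor (reduced_of_iso (σ.counitIso.app X).symm h)

lemma reduced_shift (σ : C ≌ C) (n : ℤ) {X : C} (h : ReducedE X) :
    ReducedE (shiftZ σ n X) := by
  induction n using Int.induction_on with
  | zero => exact h
  | succ p ih =>
    obtain ⟨a⟩ := shift_succ σ p X
    exact reduced_of_iso a.symm (reduced_functor σ ih)
  | pred p ih =>
    obtain ⟨a⟩ := shift_pred σ (-(p:ℤ)) X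
    exact reduced_of_iso a.symm (reduced_inverse σ ih)

lemma dual_inv_shift (σ : C ≌ C) (D : Cᵒᵖ ⥤ C)
    (hD : ∀ M : C, Nonempty (D.obj (op (σ.functor.obj M)) ≅ σ.inverse.obj (D.obj (op M))))
    (N : C) :
    Nonempty (D.obj (op (σ.inverse.obj N)) ≅ σ.functor.obj (D.obj (op N))) := by
  obtain ⟨a⟩ := hD (σ.inverse.obj N)
  have b : D.obj (op N) ≅ D.obj (op (σ.functor.obj (σ.inverse.obj N))) :=
    D.mapIso (σ.counitIso.app N).op
  have c : D.obj (op N) ≅ σ.inverse.obj (D.obj (op (σ.inverse.obj N))) := b ≪≫ a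
  exact ⟨(σ.functor.mapIso c ≪≫ σ.counitIso.app _).symm⟩

lemma dual_shift_all (σ : C ≌ C) (D : Cᵒᵖ ⥤ C)
    (hD : ∀ M : C, Nonempty (D.obj (op (σ.functor.obj M)) ≅ σ.inverse.obj (D.obj (op M))))
    (n : ℤ) (X : C) :
    Nonempty (D.obj (op (shiftZ σ n X)) ≅ shiftZ σ (-n) (D.obj (op X))) := by
  induction n using Int.induction_on with
  | zero => rw [neg_zero]; exact ⟨Iso.refl _⟩
  | succ p ih =>
    obtain ⟨s⟩ := shift_succ σ p X
    obtain ⟨a⟩ := hD (shiftZ σ (p:ℤ) X)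
    obtain ⟨b⟩ := ih
    obtain ⟨c⟩ := shift_pred σ (-(p:ℤ)) (D.obj (op X))
    have h : -((p:ℤ)+1) = -(p:ℤ) - 1 := by ring
    rw [h]
    exact ⟨(D.mapIso s.op).symm ≪≫ a ≪≫ σ.inverse.mapIso b ≪≫ c.symm⟩
  | pred p ih =>
    rw [neg_neg] at ih
    obtain ⟨s⟩ := shift_pred σ (-(p:ℤ)) X
    obtain ⟨a⟩ := dual_inv_shift σ D hD (shiftZ σ (-(p:ℤ)) X)
    obtain ⟨b⟩ := ih
    obtain ⟨c⟩ := shift_succ σ (p:ℤ) (D.obj (op X))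
    have h : -(-(p:ℤ)-1) = (p:ℤ)+1 := by ring
    rw [h]
    exact ⟨(D.mapIso s.op).symm ≪≫ a ≪≫ σ.functor.mapIso b ≪≫ c.symm⟩

end HelperLemmas

/-- The orthodox basis of a humorous category is canonical
for the induced pre-canonical structure if and only if the category is mixed. -/
theorem orthodox_canonical_iff_mixed (σ : C ≌ C) (D : Cᵒᵖ ⥤ C)
    (hC : IsHumorous K C σ D) :
    OrthodoxCanonical K C σ D ↔ Mixed K C σ D := by
  classical
  constructor
  · rintro ⟨h1, h2, h3⟩
    obtain ⟨k, reps, hreps, horb⟩ := hC.orbitFin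
    have huniq : ∀ (i j : Fin k) (m nn : ℤ),
        Nonempty (shiftZ σ m (reps i) ≅ shiftZ σ nn (reps j)) → m = nn := by
      intro i j m nn he
      obtain ⟨e2⟩ : Nonempty (shiftZ σ (nn - m) (reps j) ≅ reps i) := by
        have t1 := shift_congr σ (-m) he
        obtain ⟨u⟩ := shift_add σ (-m) m (reps i)
        obtain ⟨v⟩ := shift_add σ (-m) nn (reps j)
        have hm0 : -m + m = 0 := by ring
        have hn2 : -m + nn = nn - m := by ring
        rw [hm0] at u; rw [hn2] at v
        exact ⟨v.symm ≪≫ t1.some.symm ≪≫ u⟩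
      obtain ⟨g⟩ := hC.selfDualUnique (reps j) (reps i) (hreps j).1 (hreps i).1
        (hreps j).2 (hreps i).2 ⟨nn - m, ⟨e2⟩⟩
      by_contra hne
      have hnz : nn - m ≠ 0 := by omega
      exact hC.shiftFree (reps j) (hreps j).1 (nn - m) hnz ⟨e2 ≪≫ g.symm⟩
    set wtf : C → ℤ :=
      fun M => if h : Indec M then ((horb M h).choose_spec).choose else 0 with hwtf
    have hwtval : ∀ (M : C) (hM : Indec M) (i : Fin k) (nn : ℤ),
        Nonempty (shiftZ σ nn (reps i) ≅ M) → wtf M = nn := by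
      intro M hM i nn he
      have h0 := (horb M hM).choose_spec.choose_spec
      have hx : wtf M = ((horb M hM).choose_spec).choose := by
        simp only [hwtf]
        rw [dif_pos hM]
      rw [hx]
      exact huniq _ i _ nn ⟨h0.some ≪≫ he.some.symm⟩
    have hred : ∀ i : Fin k, ReducedE (reps i) := by
      intro i f hf
      obtain ⟨m, hm⟩ := hf
      obtain ⟨a, ha⟩ := h3 (reps i) (hreps i).1 (hreps i).2 f
      by_cases h0 : a = 0
      · rw [ha, h0, zero_smul]
      · exfalso
        have hpow : f ^ m = (a ^ m) • (1 : End (reps i)) := by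
          rw [ha, ← End.one_def, smul_pow, one_pow]
        rw [hpow] at hm
        have h1' : (1 : End (reps i)) = 0 := by
          calc (1 : End (reps i)) = (a ^ m)⁻¹ • ((a ^ m) • (1 : End (reps i))) := by
                rw [smul_smul, inv_mul_cancel₀ (pow_ne_zero m h0), one_smul]
            _ = 0 := by rw [hm, smul_zero]
        exact (hreps i).1.1 ((IsZero.iff_id_eq_zero _).mpr h1')
    refine ⟨wtf, ?_, ?_, ?_, ?_, ?_⟩
    · intro M hM
      obtain ⟨i, nn, ⟨e⟩⟩ := horb M hM
      have hm : wtf M = nn := hwtval M hM i nn ⟨e⟩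
      obtain ⟨d⟩ := dual_shift_all σ D hC.dualShift nn (reps i)
      obtain ⟨sd⟩ := (hreps i).2
      obtain ⟨sc⟩ := shift_congr σ (-nn) ⟨sd⟩
      have big : Nonempty (shiftZ σ (-nn) (reps i) ≅ D.obj (op M)) :=
        ⟨(D.mapIso e.op ≪≫ d ≪≫ sc).symm⟩
      have hMd : Indec (D.obj (op M)) :=
        indec_of_iso_s13 big.some (indec_shift σ (-nn) (hreps i).1)
      rw [hwtval (D.obj (op M)) hMd i (-nn) big, hm]
    · intro M hM
      obtain ⟨i, nn, ⟨e⟩⟩ := horb M hM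
      have hm : wtf M = nn := hwtval M hM i nn ⟨e⟩
      obtain ⟨s⟩ := shift_succ σ nn (reps i)
      have big : Nonempty (shiftZ σ (nn+1) (reps i) ≅ σ.functor.obj M) :=
        ⟨s ≪≫ σ.functor.mapIso e⟩
      have hMi : Indec (σ.functor.obj M) := indec_map_s13 σ.functor hM
      rw [hwtval _ hMi i (nn+1) big, hm]
    · intro M N hM hN hlt f
      obtain ⟨i, nn, ⟨e⟩⟩ := horb M hM
      obtain ⟨j, mm, ⟨e'⟩⟩ := horb N hN
      have h1m := hwtval M hM i nn ⟨e⟩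
      have h2m := hwtval N hN j mm ⟨e'⟩
      rw [h1m, h2m] at hlt
      have base : ∀ g : reps i ⟶ shiftZ σ (mm - nn) (reps j), g = 0 :=
        h1 (reps i) (reps j) (hreps i).1 (hreps i).2 (hreps j).1 (hreps j).2
          (mm - nn) (by omega)
      have step := homZero_shift σ nn base
      obtain ⟨u⟩ := shift_add σ nn (mm - nn) (reps j)
      have hsum : nn + (mm - nn) = mm := by ring
      rw [hsum] at u
      exact homZero_of_iso e (u ≪≫ e') step f
    · intro M N hM hN hni hwteq f
      obtain ⟨i, nn, ⟨e⟩⟩ := horb M hM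
      obtain ⟨j, mm, ⟨e'⟩⟩ := horb N hN
      have h1m := hwtval M hM i nn ⟨e⟩
      have h2m := hwtval N hN j mm ⟨e'⟩
      rw [h1m, h2m] at hwteq
      rw [hwteq] at e'
      have hnij : ¬ Nonempty (reps i ≅ reps j) := by
        rintro ⟨g⟩
        obtain ⟨sg⟩ := shift_congr σ nn ⟨g⟩
        exact hni ⟨e.symm ≪≫ sg ≪≫ e'⟩
      have base := h2 (reps i) (reps j) (hreps i).1 (hreps i).2 (hreps j).1
        (hreps j).2 hnij
      have step := homZero_shift σ nn base
      exact homZero_of_iso e e' step f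
    · intro M hM f
      obtain ⟨i, nn, ⟨e⟩⟩ := horb M hM
      have hr : ReducedE M := reduced_of_iso e (reduced_shift σ nn (hred i))
      obtain ⟨a, ha⟩ := hC.endLocal M hM f
      exact ⟨a, sub_eq_zero.mp (hr _ ha)⟩
  · rintro ⟨wt, hwt⟩
    have wt_iso : ∀ M N : C, Indec M → Indec N → (M ≅ N) → wt M = wt N := by
      intro M N hM hN e
      by_contra hne
      rcases lt_or_gt_of_ne hne with h | h
      · have h0 := hwt.hom_lt N M hN hM h e.inv
        have hid : 𝟙 N = 0 := by rw [← e.inv_hom_id, h0, zero_comp]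
        exact hN.1 ((IsZero.iff_id_eq_zero N).mpr hid)
      · have h0 := hwt.hom_lt M N hM hN h e.hom
        have hid : 𝟙 M = 0 := by rw [← e.hom_inv_id, h0, zero_comp]
        exact hM.1 ((IsZero.iff_id_eq_zero M).mpr hid)
    have wt_G : ∀ M : C, Indec M → wt (σ.inverse.obj M) = wt M - 1 := by
      intro M hM
      have hGM : Indec (σ.inverse.obj M) := indec_map_s13 σ.inverse hM
      have h1' := hwt.shift (σ.inverse.obj M) hGM
      have hFGM : Indec (σ.functor.obj (σ.inverse.obj M)) := indec_map_s13 σ.functor hGM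
      have h2' := wt_iso _ M hFGM hM (σ.counitIso.app M)
      omega
    have wt_shift : ∀ (n : ℤ) (M : C), Indec M →
        Indec (shiftZ σ n M) ∧ wt (shiftZ σ n M) = wt M + n := by
      intro n M hM
      induction n using Int.induction_on with
      | zero => exact ⟨hM, by rw [shiftZ_zero]; omega⟩
      | succ p ih =>
        obtain ⟨ih1, ih2⟩ := ih
        obtain ⟨s⟩ := shift_succ σ p M
        have hFi : Indec (σ.functor.obj (shiftZ σ (p:ℤ) M)) := indec_map_s13 σ.functor ih1
        have hind : Indec (shiftZ σ ((p:ℤ)+1) M) := indec_of_iso_s13 s.symm hFi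
        refine ⟨hind, ?_⟩
        have hweq := wt_iso _ _ hind hFi s
        have hsh := hwt.shift _ ih1
        omega
      | pred p ih =>
        obtain ⟨ih1, ih2⟩ := ih
        obtain ⟨s⟩ := shift_pred σ (-(p:ℤ)) M
        have hGi : Indec (σ.inverse.obj (shiftZ σ (-(p:ℤ)) M)) := indec_map_s13 σ.inverse ih1
        have hind : Indec (shiftZ σ (-(p:ℤ)-1) M) := indec_of_iso_s13 s.symm hGi
        refine ⟨hind, ?_⟩
        have hweq := wt_iso _ _ hind hGi s
        have hsh := wt_G _ ih1
        omega
    have wt_sd : ∀ P : C, Indec P → SelfDual D P → wt P = 0 := by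
      intro P hP hsd
      obtain ⟨sd⟩ := hsd
      have hDP : Indec (D.obj (op P)) := indec_of_iso_s13 sd.symm hP
      have h1' := hwt.dual P hP
      have h2' := wt_iso _ _ hDP hP sd
      omega
    refine ⟨?_, ?_, ?_⟩
    · intro P P' hP hsd hP' hsd' i hi f
      obtain ⟨hind, hw⟩ := wt_shift i P' hP'
      have hwP := wt_sd P hP hsd
      have hwP' := wt_sd P' hP' hsd'
      exact hwt.hom_lt P (shiftZ σ i P') hP hind (by omega) f
    · intro P P' hP hsd hP' hsd' hni f
      exact hwt.hom_eq P P' hP hP' hni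
        (by rw [wt_sd P hP hsd, wt_sd P' hP' hsd']) f
    · intro P hP _ f
      exact hwt.end_scalar P hP f


end
end
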